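/- arXiv:2604.22420 — 6 statements merged into one kernel-verified Lean document; each statement's English description precedes it below -/
import Mathlib

section
/- Let Ω ⊆ ℝ^m be open, μ a locally finite Borel (Radon) measure on Ω, δ > 0, and Ω_δ := {p ∈ Ω : closedBall(p, δ) ⊆ Ω}. Then the set {p ∈ Ω_δ : μ({q : |q − p| = δ}) > 0} of centers whose boundary sphere of radius δ carries positive μ-measure is contained in a Borel set of m-dimensional Lebesgue measure zero. -/
open MeasureTheory Metric ENNReal

/-- The set of centers `p ∈ Ω_δ` whose boundary sphere of radius `δ` carries positive
`μ`-measure is contained in a Borel set of Lebesgue measure zero. -/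
theorem positive_sphere_centers_null
    (m : ℕ) (Ω : Set (EuclideanSpace ℝ (Fin m))) (hΩ : IsOpen Ω)
    (μ : Measure (EuclideanSpace ℝ (Fin m)))
    (hμ : ∀ K ⊆ Ω, IsCompact K → μ K < ⊤)
    (δ : ℝ) (hδ : 0 < δ) :
    ∃ N : Set (EuclideanSpace ℝ (Fin m)), MeasurableSet N ∧ volume N = 0 ∧
      {p ∈ Ω | closedBall p δ ⊆ Ω} ∩ {p | 0 < μ (sphere p δ)} ⊆ N := by
  classical
  -- compact exhaustion of Ω
  set K : ℕ → Set (EuclideanSpace ℝ (Fin m)) :=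
    fun k => closedBall 0 k \ thickening (1 / (k + 1)) Ωᶜ with hKdef
  have hKcompact : ∀ k, IsCompact (K k) :=
    fun k => (isCompact_closedBall 0 k).diff isOpen_thickening
  have hKsub : ∀ k, K k ⊆ Ω := by
    intro k x hx
    by_contra hxΩ
    exact hx.2 (self_subset_thickening (by positivity) Ωᶜ hxΩ)
  have hμk : ∀ k, IsFiniteMeasure (μ.restrict (K k)) := fun k =>
    ⟨by rw [Measure.restrict_apply_univ]; exact hμ _ (hKsub k) (hKcompact k)⟩
  -- the measurable "distance equals δ" set
  set A : Set (EuclideanSpace ℝ (Fin m) × EuclideanSpace ℝ (Fin m)) :=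
    {pq | dist pq.2 pq.1 = δ} with hAdef
  have hA : MeasurableSet A :=
    (isClosed_eq (continuous_dist.comp (continuous_snd.prodMk continuous_fst))
      continuous_const).measurableSet
  have hpre : ∀ p : EuclideanSpace ℝ (Fin m), (Prod.mk p ⁻¹' A) = sphere p δ := by
    intro p; ext q
    simp only [hAdef, Set.mem_preimage, Set.mem_setOf_eq, mem_sphere]
  have hsec : ∀ q : EuclideanSpace ℝ (Fin m),
      ((fun p => (p, q)) ⁻¹' A) = sphere q δ := by
    intro q; ext p
    simp only [hAdef, Set.mem_preimage, Set.mem_setOf_eq, mem_sphere, dist_comm]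
  set f : ℕ → EuclideanSpace ℝ (Fin m) → ℝ≥0∞ :=
    fun k p => (μ.restrict (K k)) (sphere p δ) with hfdef
  have hfmeas : ∀ k, Measurable (f k) := by
    intro k
    haveI := hμk k
    have h := measurable_measure_prodMk_left (ν := μ.restrict (K k)) hA
    simp only [hpre] at h
    exact h
  have hint : ∀ k, ∫⁻ p, f k p = 0 := by
    intro k
    haveI := hμk k
    have h1 := Measure.prod_apply (μ := volume) (ν := μ.restrict (K k)) hA
    simp only [hpre] at h1
    have h2 := Measure.prod_apply_symm (μ := volume) (ν := μ.restrict (K k)) hA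
    simp only [hsec] at h2
    have h3 : ∀ q : EuclideanSpace ℝ (Fin m), volume (sphere q δ) = 0 := fun q =>
      Measure.addHaar_sphere_of_ne_zero volume q hδ.ne'
    rw [hfdef]
    simp only [← h1, h2, h3, lintegral_zero]
  have hnull : ∀ k, volume {p | f k p ≠ 0} = 0 := by
    intro k
    have := (lintegral_eq_zero_iff (hfmeas k)).1 (hint k)
    simpa [Filter.EventuallyEq, ae_iff] using this
  refine ⟨⋃ k, {p | f k p ≠ 0}, ?_, ?_, ?_⟩
  · exact MeasurableSet.iUnion fun k =>
      (hfmeas k (measurableSet_singleton 0)).compl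
  · exact measure_iUnion_null hnull
  · rintro p ⟨⟨hpΩ, hball⟩, hpos⟩
    -- find k with closedBall p δ ⊆ K k
    obtain ⟨ε, hε, hthick⟩ :=
      (isCompact_closedBall p δ).exists_thickening_subset_open hΩ hball
    obtain ⟨n, hn⟩ := exists_nat_ge (max (‖p‖ + δ) (1 / ε))
    have hsubK : closedBall p δ ⊆ K n := by
      intro x hx
      constructor
      · have ht : dist x 0 ≤ dist x p + dist p 0 := dist_triangle _ _ _
        have h1 : dist x p ≤ δ := mem_closedBall.1 hx
        have h2 : dist p 0 = ‖p‖ := by simp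
        have h4 : dist x 0 ≤ ‖p‖ + δ := by linarith [ht, h1, h2.le]
        exact mem_closedBall.2 (h4.trans ((le_max_left _ _).trans hn))
      · intro hmem
        obtain ⟨y, hyΩ, hxy⟩ := mem_thickening_iff.1 hmem
        have hεn : 1 / ((n : ℝ) + 1) ≤ ε := by
          have h1 : (1 : ℝ) / ε ≤ n + 1 := ((le_max_right _ _).trans hn).trans (by linarith)
          rw [div_le_iff₀ (by positivity)]
          rw [div_le_iff₀ hε] at h1
          linarith
        have hy : y ∈ thickening ε (closedBall p δ) :=
          mem_thickening_iff.2 ⟨x, hx, by rw [dist_comm]; linarith⟩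
        exact hyΩ (hthick hy)
    refine Set.mem_iUnion.2 ⟨n, ?_⟩
    have hfp : f n p = μ (sphere p δ) := by
      show (μ.restrict (K n)) (sphere p δ) = μ (sphere p δ)
      rw [Measure.restrict_apply isClosed_sphere.measurableSet,
        Set.inter_eq_self_of_subset_left (sphere_subset_closedBall.trans hsubK)]
    simp only [Set.mem_setOf_eq, hfp]
    exact hpos.ne'
end

section
/- Let Ω ⊆ ℝ^m be open, let f : Ω → ℝ be Lebesgue measurable and locally bounded, and let Γ ⊆ B_1(0) ⊆ ℝ^m be a countable set. Then for Lebesgue-almost every point p ∈ Ω and every γ̇ ∈ Γ, the point t = 0 is a Lebesgue point of the map L^f_{p,γ̇} : (−ε, ε) → ℝ, t ↦ f(p + t γ̇), where ε > 0 is any radius with B_ε(p) ⊆ Ω. -/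
open MeasureTheory Metric Filter ENNReal

variable {m : ℕ}



private lemma meas_affine (v : EuclideanSpace ℝ (Fin m)) :
    Measurable (fun q : (EuclideanSpace ℝ (Fin m)) × ℝ => q.1 + q.2 • v) :=
  (continuous_fst.add (continuous_snd.smul continuous_const)).measurable

private lemma meas_affine' (v p : EuclideanSpace ℝ (Fin m)) :
    Measurable (fun t : ℝ => p + t • v) :=
  (continuous_const.add (continuous_id.smul continuous_const)).measurable

private lemma null_translate (v : EuclideanSpace ℝ (Fin m))
    {A : Set (EuclideanSpace ℝ (Fin m))} (hA : volume A = 0) :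
    ∀ᵐ p : EuclideanSpace ℝ (Fin m), ∀ᵐ t : ℝ, p + t • v ∉ A := by
  obtain ⟨A', hAA', hA'meas, hA'0⟩ := exists_measurable_superset_of_null hA
  set F : EuclideanSpace ℝ (Fin m) → ℝ → ℝ≥0∞ :=
    fun p t => A'.indicator (fun _ => (1 : ℝ≥0∞)) (p + t • v) with hF
  have hFmeas : Measurable (Function.uncurry F) :=
    (measurable_const.indicator hA'meas).comp (meas_affine v)
  have hinner : ∀ t : ℝ, ∫⁻ p, F p t ∂(volume : Measure (EuclideanSpace ℝ (Fin m))) = 0 := by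
    intro t
    rw [show (fun p => F p t)
        = fun p : EuclideanSpace ℝ (Fin m) => A'.indicator (fun _ => (1 : ℝ≥0∞)) (p + t • v)
      from rfl]
    rw [lintegral_add_right_eq_self (μ := (volume : Measure (EuclideanSpace ℝ (Fin m))))
      (A'.indicator (fun _ => (1 : ℝ≥0∞))) (t • v), lintegral_indicator hA'meas _]
    simp [hA'0]
  have hzero : ∫⁻ p, ∫⁻ t, F p t ∂(volume : Measure ℝ)
      ∂(volume : Measure (EuclideanSpace ℝ (Fin m))) = 0 := by
    rw [lintegral_lintegral_swap hFmeas.aemeasurable]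
    simp [hinner]
  have hmeas1 : Measurable fun p : EuclideanSpace ℝ (Fin m) =>
      ∫⁻ t, F p t ∂(volume : Measure ℝ) := hFmeas.lintegral_prod_right'
  filter_upwards [(lintegral_eq_zero_iff hmeas1).1 hzero] with p hp
  have hmeas2 : Measurable fun t : ℝ => F p t :=
    (measurable_const.indicator hA'meas).comp (meas_affine' v p)
  filter_upwards [(lintegral_eq_zero_iff hmeas2).1 hp] with t ht hmem
  have h1 : F p t = 1 := Set.indicator_of_mem (hAA' hmem) _
  rw [h1] at ht
  exact one_ne_zero ht

private lemma null_of_ae_translate (v : EuclideanSpace ℝ (Fin m))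
    {B : Set (EuclideanSpace ℝ (Fin m))} (hB : MeasurableSet B)
    (h : ∀ p : EuclideanSpace ℝ (Fin m), ∀ᵐ t : ℝ, p + t • v ∉ B) : volume B = 0 := by
  set F : EuclideanSpace ℝ (Fin m) → ℝ → ℝ≥0∞ :=
    fun p t => B.indicator (fun _ => (1 : ℝ≥0∞)) (p + t • v) with hF
  have hFmeas : Measurable (Function.uncurry F) :=
    (measurable_const.indicator hB).comp (meas_affine v)
  have hswap := lintegral_lintegral_swap
    (μ := (volume : Measure (EuclideanSpace ℝ (Fin m))))
    (ν := (volume.restrict (Set.Ioo (0:ℝ) 1))) hFmeas.aemeasurable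
  have hinner : ∀ p : EuclideanSpace ℝ (Fin m),
      ∫⁻ t, F p t ∂(volume.restrict (Set.Ioo (0:ℝ) 1)) = 0 := by
    intro p
    have hmeas2 : Measurable fun t : ℝ => F p t :=
      (measurable_const.indicator hB).comp (meas_affine' v p)
    rw [lintegral_eq_zero_iff hmeas2]
    filter_upwards [ae_restrict_of_ae (h p)] with t ht
    simp [hF, Set.indicator_of_notMem ht]
  have houter : ∀ t : ℝ,
      ∫⁻ p, F p t ∂(volume : Measure (EuclideanSpace ℝ (Fin m))) = volume B := by
    intro t
    rw [show (fun p => F p t)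
        = fun p : EuclideanSpace ℝ (Fin m) => B.indicator (fun _ => (1 : ℝ≥0∞)) (p + t • v)
      from rfl]
    rw [lintegral_add_right_eq_self (μ := (volume : Measure (EuclideanSpace ℝ (Fin m))))
      (B.indicator (fun _ => (1 : ℝ≥0∞))) (t • v), lintegral_indicator hB _]
    simp
  have hkey : (0 : ℝ≥0∞) = volume B * volume (Set.Ioo (0:ℝ) 1) := by
    calc (0 : ℝ≥0∞)
        = ∫⁻ p, ∫⁻ t, F p t ∂(volume.restrict (Set.Ioo (0:ℝ) 1))
            ∂(volume : Measure (EuclideanSpace ℝ (Fin m))) := by simp [hinner]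
      _ = ∫⁻ t, ∫⁻ p, F p t ∂(volume : Measure (EuclideanSpace ℝ (Fin m)))
            ∂(volume.restrict (Set.Ioo (0:ℝ) 1)) := hswap
      _ = ∫⁻ _t in Set.Ioo (0:ℝ) 1, volume B ∂(volume : Measure ℝ) :=
          lintegral_congr houter
      _ = volume B * volume (Set.Ioo (0:ℝ) 1) := setLIntegral_const _ _
  rw [Real.volume_Ioo] at hkey
  simpa using hkey.symm






private lemma core_tendsto (v : EuclideanSpace ℝ (Fin m))
    {G : EuclideanSpace ℝ (Fin m) → ℝ} (hG : Measurable G) {C : ℝ}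
    (hC : ∀ x, |G x| ≤ C) :
    ∀ᵐ p : EuclideanSpace ℝ (Fin m), Tendsto (fun r : ℝ =>
        (1 / (2 * r)) * ∫ t in Set.Ioo (-r) r, |G (p + t • v) - G p|)
      (nhdsWithin 0 (Set.Ioi 0)) (nhds 0) := by
  set Φ : EuclideanSpace ℝ (Fin m) → ℝ → ℝ := fun p r =>
    (1 / (2 * r)) * ∫ t in Set.Ioo (-r) r, |G (p + t • v) - G p| with hΦ
  have hCnn : 0 ≤ C := le_trans (abs_nonneg _) (hC 0)
  have hint_meas : Measurable fun q : (EuclideanSpace ℝ (Fin m)) × ℝ =>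
      |G (q.1 + q.2 • v) - G q.1| :=
    ((hG.comp (meas_affine v)).sub (hG.comp measurable_fst)).abs
  have hΦmeas : ∀ r : ℝ, Measurable fun p => Φ p r := by
    intro r
    exact ((hint_meas.stronglyMeasurable.integral_prod_right'
      (ν := volume.restrict (Set.Ioo (-r) r))).measurable).const_mul _
  have hintegrable : ∀ (p : EuclideanSpace ℝ (Fin m)) (a b : ℝ),
      IntegrableOn (fun t : ℝ => |G (p + t • v) - G p|) (Set.Ioo a b) volume := by
    intro p a b
    apply Measure.integrableOn_of_bounded (M := 2 * C)
    · rw [Real.volume_Ioo]; exact ENNReal.ofReal_ne_top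
    · exact ((hG.comp (meas_affine' v p)).sub measurable_const).abs.aestronglyMeasurable
    · filter_upwards with t
      rw [Real.norm_eq_abs, abs_abs]
      calc |G (p + t • v) - G p| ≤ |G (p + t • v)| + |G p| := abs_sub _ _
        _ ≤ C + C := add_le_add (hC _) (hC _)
        _ = 2 * C := by ring
  have hInonneg : ∀ (p : EuclideanSpace ℝ (Fin m)) (a b : ℝ),
      0 ≤ ∫ t in Set.Ioo a b, |G (p + t • v) - G p| :=
    fun p a b => integral_nonneg fun t => abs_nonneg _
  have hΦnonneg : ∀ (p : EuclideanSpace ℝ (Fin m)) (r : ℝ), 0 < r → 0 ≤ Φ p r := by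
    intro p r hr
    exact mul_nonneg (by positivity) (hInonneg p _ _)
  have hImono : ∀ (p : EuclideanSpace ℝ (Fin m)) (r r' : ℝ), r ≤ r' →
      (∫ t in Set.Ioo (-r) r, |G (p + t • v) - G p|) ≤
        ∫ t in Set.Ioo (-r') r', |G (p + t • v) - G p| := by
    intro p r r' hrr
    apply setIntegral_mono_set (hintegrable p _ _)
    · filter_upwards with t using abs_nonneg _
    · exact (Set.Ioo_subset_Ioo (by linarith) hrr).eventuallyLE
  -- a.e. point on each line is fine
  have key : ∀ p : EuclideanSpace ℝ (Fin m), ∀ᵐ s : ℝ,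
      Tendsto (fun r => Φ (p + s • v) r) (nhdsWithin 0 (Set.Ioi 0)) (nhds 0) := by
    intro p
    set h : ℝ → ℝ := fun t => G (p + t • v) with hh
    have hhmeas : Measurable h := hG.comp (meas_affine' v p)
    have hloc : LocallyIntegrable h volume :=
      (memLp_top_of_bound hhmeas.aestronglyMeasurable C
        (by filter_upwards with t; rw [Real.norm_eq_abs]; exact hC _)).locallyIntegrable le_top
    filter_upwards [IsUnifLocDoublingMeasure.ae_tendsto_average_norm_sub
      (μ := (volume : Measure ℝ)) hloc 1] with s hs
    have hev : ∀ᶠ j in nhdsWithin (0:ℝ) (Set.Ioi 0), s ∈ closedBall s (1 * j) := by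
      filter_upwards [self_mem_nhdsWithin] with j hj
      exact mem_closedBall_self (by simpa using (le_of_lt hj))
    have havg := hs (fun _ : ℝ => s) id tendsto_id hev
    apply Tendsto.congr' _ havg
    filter_upwards [self_mem_nhdsWithin] with r hr
    have hrpos : (0:ℝ) < r := hr
    have e1 : ∀ t : ℝ, (p + s • v) + t • v = p + (s + t) • v := by
      intro t; rw [add_smul]; abel
    have e2 : (∫ t in Set.Ioo (-r) r, |G ((p + s • v) + t • v) - G (p + s • v)|)
        = ∫ y in Set.Ioo (s - r) (s + r), |h y - h s| := by
      have hpt : ∀ t : ℝ, |G ((p + s • v) + t • v) - G (p + s • v)| = |h (s + t) - h s| := by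
        intro t; rw [hh]; simp only [e1 t]
      have hsr : s + -r = s - r := by ring
      calc (∫ t in Set.Ioo (-r) r, |G ((p + s • v) + t • v) - G (p + s • v)|)
          = ∫ t in Set.Ioo (-r) r, |h (s + t) - h s| :=
            setIntegral_congr_ae measurableSet_Ioo (by filter_upwards with t _ using hpt t)
        _ = ∫ t in (-r)..r, |h (s + t) - h s| := by
            rw [intervalIntegral.integral_of_le (by linarith), integral_Ioc_eq_integral_Ioo]
        _ = ∫ y in (s + -r)..(s + r), |h y - h s| := intervalIntegral.integral_comp_add_left (fun y => |h y - h s|) s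
        _ = ∫ y in Set.Ioo (s - r) (s + r), |h y - h s| := by
            rw [hsr, intervalIntegral.integral_of_le (by linarith),
              integral_Ioc_eq_integral_Ioo]
    show ⨍ y in closedBall s (id r), ‖h y - h s‖ ∂volume = Φ (p + s • v) r
    have h2r : s + r - (s - r) = 2 * r := by ring
    rw [hΦ]
    simp only [id]
    rw [setAverage_eq, Real.closedBall_eq_Icc, integral_Icc_eq_integral_Ioo, Real.volume_real_Icc,
      h2r, max_eq_left (by linarith), e2, smul_eq_mul, one_div]
    simp only [Real.norm_eq_abs]
  -- dyadic characterization
  have hiff : ∀ p : EuclideanSpace ℝ (Fin m),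
      Tendsto (fun n : ℕ => Φ p ((2:ℝ)⁻¹ ^ n)) atTop (nhds 0) →
      Tendsto (fun r => Φ p r) (nhdsWithin 0 (Set.Ioi 0)) (nhds 0) := by
    intro p hdy
    rw [Metric.tendsto_nhdsWithin_nhds]
    intro ε hε
    rw [Metric.tendsto_atTop] at hdy
    obtain ⟨N, hN⟩ := hdy (ε / 2) (by linarith)
    refine ⟨(2:ℝ)⁻¹ ^ N, by positivity, ?_⟩
    intro r hr hrd
    have hrpos : (0:ℝ) < r := hr
    have hrlt : r < (2:ℝ)⁻¹ ^ N := by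
      rwa [Real.dist_eq, sub_zero, abs_of_pos hrpos] at hrd
    have hex : ∃ k : ℕ, (2:ℝ)⁻¹ ^ k < r := exists_pow_lt_of_lt_one hrpos (by norm_num)
    have hk0 : Nat.find hex ≠ 0 := by
      intro h0
      have hspec := Nat.find_spec hex
      rw [h0, pow_zero] at hspec
      have hle1 : (2:ℝ)⁻¹ ^ N ≤ 1 := pow_le_one₀ (by norm_num) (by norm_num)
      linarith
    obtain ⟨n, hn⟩ := Nat.exists_eq_succ_of_ne_zero hk0
    have h1 : (2:ℝ)⁻¹ ^ (n + 1) < r := by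
      have hspec := Nat.find_spec hex
      rwa [hn] at hspec
    have h2 : r ≤ (2:ℝ)⁻¹ ^ n := by
      by_contra hcon
      exact (Nat.find_min hex (by rw [hn]; exact n.lt_succ_self)) (lt_of_not_ge hcon)
    have hNn : N ≤ n := by
      by_contra hcon
      push_neg at hcon
      have : (2:ℝ)⁻¹ ^ N ≤ (2:ℝ)⁻¹ ^ (n+1) :=
        pow_le_pow_of_le_one (by norm_num) (by norm_num) hcon
      linarith
    have hφn := hN n hNn
    rw [Real.dist_eq, sub_zero] at hφn
    have hφn' : Φ p ((2:ℝ)⁻¹ ^ n) < ε / 2 := lt_of_abs_lt hφn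
    have hb1 : Φ p r ≤ (1 / (2 * r)) *
        ∫ t in Set.Ioo (-((2:ℝ)⁻¹ ^ n)) ((2:ℝ)⁻¹ ^ n), |G (p + t • v) - G p| := by
      rw [hΦ]
      exact mul_le_mul_of_nonneg_left (hImono p r _ h2) (by positivity)
    have hb2 : (1 / (2 * r)) ≤ 1 / (2 * (2:ℝ)⁻¹ ^ (n+1)) :=
      one_div_le_one_div_of_le (by positivity) (by linarith)
    have hb3 : Φ p r ≤ (1 / (2 * (2:ℝ)⁻¹ ^ (n+1))) *
        ∫ t in Set.Ioo (-((2:ℝ)⁻¹ ^ n)) ((2:ℝ)⁻¹ ^ n), |G (p + t • v) - G p| :=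
      le_trans hb1 (mul_le_mul_of_nonneg_right hb2 (hInonneg p _ _))
    have heq : (1 / (2 * (2:ℝ)⁻¹ ^ (n+1))) = 2 * (1 / (2 * (2:ℝ)⁻¹ ^ n)) := by
      have hpn : (0:ℝ) < (2:ℝ)⁻¹ ^ n := by positivity
      rw [pow_succ]
      field_simp
    have hb4 : Φ p r ≤ 2 * Φ p ((2:ℝ)⁻¹ ^ n) := by
      rw [heq, mul_assoc] at hb3
      rw [hΦ]
      exact hb3
    rw [Real.dist_eq, sub_zero, abs_of_nonneg (hΦnonneg p r hrpos)]
    calc Φ p r ≤ 2 * Φ p ((2:ℝ)⁻¹ ^ n) := hb4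
      _ < 2 * (ε/2) := by exact mul_lt_mul_of_pos_left hφn' (by norm_num)
      _ = ε := by ring
  set Eset : Set (EuclideanSpace ℝ (Fin m)) :=
    {p | Tendsto (fun n : ℕ => Φ p ((2:ℝ)⁻¹ ^ n)) atTop (nhds 0)} with hEset
  have hEmeas : MeasurableSet Eset := by
    exact measurableSet_tendsto_fun (fun n => hΦmeas ((2:ℝ)⁻¹ ^ n))
      (measurable_const : Measurable fun _ : EuclideanSpace ℝ (Fin m) => (0:ℝ))
  have hmem : ∀ p : EuclideanSpace ℝ (Fin m), ∀ᵐ s : ℝ, p + s • v ∈ Eset := by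
    intro p
    filter_upwards [key p] with s hs
    have hseq : Tendsto (fun n : ℕ => (2:ℝ)⁻¹ ^ n) atTop (nhdsWithin 0 (Set.Ioi 0)) := by
      rw [tendsto_nhdsWithin_iff]
      exact ⟨tendsto_pow_atTop_nhds_zero_of_lt_one (by norm_num) (by norm_num),
        Filter.Eventually.of_forall fun n => Set.mem_Ioi.2 (by positivity)⟩
    exact hs.comp hseq
  have hnull : volume Esetᶜ = 0 := by
    apply null_of_ae_translate v hEmeas.compl
    intro p
    filter_upwards [hmem p] with s hs
    simpa using hs
  have hae : ∀ᵐ p : EuclideanSpace ℝ (Fin m), p ∈ Eset := by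
    rw [ae_iff]
    exact hnull
  filter_upwards [hae] with p hp
  have := hiff p hp
  rw [hΦ] at this
  exact this





/-- For a Lebesgue measurable and locally bounded `f : Ω → ℝ` on an open `Ω ⊆ ℝ^m` and a
countable set `Γ ⊆ B_1(0)`, for a.e. `p ∈ Ω` and every `γ̇ ∈ Γ`, `t = 0` is a Lebesgue
point of `t ↦ f(p + t γ̇)`. -/
theorem lebesgue_point_along_lines
    (m : ℕ) (Ω : Set (EuclideanSpace ℝ (Fin m))) (hΩ : IsOpen Ω)
    (f : EuclideanSpace ℝ (Fin m) → ℝ)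
    (hmeas : NullMeasurable f (volume.restrict Ω))
    (hbd : ∀ K ⊆ Ω, IsCompact K → ∃ C : ℝ, ∀ x ∈ K, |f x| ≤ C)
    (Γ : Set (EuclideanSpace ℝ (Fin m))) (hΓc : Γ.Countable)
    (hΓ : Γ ⊆ ball (0 : EuclideanSpace ℝ (Fin m)) 1) :
    ∀ᵐ p ∂(volume.restrict Ω), ∀ γ' ∈ Γ, ∀ ε : ℝ, 0 < ε → ball p ε ⊆ Ω →
      Tendsto (fun r : ℝ =>
          (1 / (2 * r)) * ∫ t in Set.Ioo (-r) r, |f (p + t • γ') - f p|)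
        (nhdsWithin 0 (Set.Ioi 0)) (nhds 0) := by
  have hΩm : MeasurableSet Ω := hΩ.measurableSet
  obtain ⟨g, hg, hfg⟩ : ∃ g, Measurable g ∧ f =ᵐ[volume.restrict Ω] g := by
    have h := hmeas.aemeasurable
    exact ⟨h.mk f, h.measurable_mk, h.ae_eq_mk⟩
  have hfg' : ∀ᵐ x ∂(volume : Measure (EuclideanSpace ℝ (Fin m))), x ∈ Ω → f x = g x :=
    (ae_restrict_iff' hΩm).1 hfg
  set A : Set (EuclideanSpace ℝ (Fin m)) := {x | x ∈ Ω ∧ f x ≠ g x} with hA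
  have hAnull : volume A = 0 := by
    have hsub : A ⊆ {x | ¬ (x ∈ Ω → f x = g x)} := fun x hx h => hx.2 (h hx.1)
    exact measure_mono_null hsub (ae_iff.1 hfg')
  set K : ℕ → Set (EuclideanSpace ℝ (Fin m)) := fun n =>
    {x | ENNReal.ofReal (1/(n+1 : ℝ)) ≤ EMetric.infEdist x Ωᶜ} ∩ closedBall 0 ((n:ℝ)+2) with hK
  set Ωn : ℕ → Set (EuclideanSpace ℝ (Fin m)) := fun n =>
    {x | ENNReal.ofReal (2/(n+1 : ℝ)) ≤ EMetric.infEdist x Ωᶜ} ∩ closedBall 0 ((n:ℝ)+1) with hΩn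
  have hKcl : ∀ n, IsClosed (K n) := fun n =>
    (isClosed_le continuous_const EMetric.continuous_infEdist).inter isClosed_closedBall
  have hKcomp : ∀ n, IsCompact (K n) := fun n =>
    (isCompact_closedBall (0 : EuclideanSpace ℝ (Fin m)) ((n:ℝ)+2)).of_isClosed_subset
      (hKcl n) Set.inter_subset_right
  have hKsub : ∀ n, K n ⊆ Ω := by
    intro n x hx
    by_contra hxΩ
    have h0 : EMetric.infEdist x Ωᶜ = 0 := EMetric.infEdist_zero_of_mem hxΩ
    have h1 : ENNReal.ofReal (1/(n+1 : ℝ)) ≤ EMetric.infEdist x Ωᶜ := hx.1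
    rw [h0, nonpos_iff_eq_zero] at h1
    exact (ENNReal.ofReal_pos.2 (by positivity)).ne' h1
  have main : ∀ v ∈ Γ, ∀ n : ℕ,
      ∀ᵐ p ∂(volume : Measure (EuclideanSpace ℝ (Fin m))), p ∈ Ωn n →
      Tendsto (fun r : ℝ =>
          (1 / (2 * r)) * ∫ t in Set.Ioo (-r) r, |f (p + t • v) - f p|)
        (nhdsWithin 0 (Set.Ioi 0)) (nhds 0) := by
    intro v hv n
    classical
    obtain ⟨C₀, hC₀⟩ := hbd (K n) (hKsub n) (hKcomp n)
    set C := max C₀ 0 with hC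
    have hCb : ∀ x ∈ K n, |f x| ≤ C := fun x hx => (hC₀ x hx).trans (le_max_left _ _)
    have hC0 : 0 ≤ C := le_max_right _ _
    set G : EuclideanSpace ℝ (Fin m) → ℝ :=
      fun x => if x ∈ K n then max (-C) (min C (g x)) else 0 with hG
    have hGmeas : Measurable G :=
      Measurable.ite (hKcl n).measurableSet
        (measurable_const.max (measurable_const.min hg)) measurable_const
    have hGbd : ∀ x, |G x| ≤ C := by
      intro x
      rw [hG]
      dsimp only
      split_ifs
      · rw [abs_le]
        exact ⟨le_max_left _ _, max_le (by linarith) (min_le_left _ _)⟩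
      · simpa using hC0
    have hfeqG : ∀ x ∈ K n, f x = g x → G x = f x := by
      intro x hx hfgx
      rw [hG]
      dsimp only
      rw [if_pos hx, ← hfgx, min_eq_right (abs_le.1 (hCb x hx)).2,
        max_eq_right (abs_le.1 (hCb x hx)).1]
    filter_upwards [core_tendsto v hGmeas hGbd, null_translate v hAnull,
      (ae_iff.2 (by simpa using hAnull) : ∀ᵐ p : EuclideanSpace ℝ (Fin m), p ∉ A)]
      with p hp1 hp2 hp3
    intro hpΩn
    have hpK : p ∈ K n := by
      constructor
      · refine le_trans (ENNReal.ofReal_le_ofReal ?_) hpΩn.1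
        gcongr
        norm_num
      · exact closedBall_subset_closedBall (by norm_num) hpΩn.2
    have hv1 : ‖v‖ < 1 := by simpa using hΓ hv
    have hKfsub : ∀ t : ℝ, |t| < 1/(n+1 : ℝ) → p + t • v ∈ K n := by
      intro t ht
      have htv : ‖t • v‖ ≤ |t| := by
        rw [norm_smul, Real.norm_eq_abs]
        calc |t| * ‖v‖ ≤ |t| * 1 := mul_le_mul_of_nonneg_left hv1.le (abs_nonneg t)
          _ = |t| := mul_one _
      constructor
      · have hedist : edist p (p + t • v) ≤ ENNReal.ofReal (1/(n+1 : ℝ)) := by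
          rw [edist_dist]
          apply ENNReal.ofReal_le_ofReal
          rw [dist_eq_norm]
          have : p - (p + t • v) = -(t • v) := by abel
          rw [this, norm_neg]
          exact htv.trans ht.le
        have hchain : EMetric.infEdist p Ωᶜ ≤ EMetric.infEdist (p + t • v) Ωᶜ
            + edist p (p + t • v) :=
          EMetric.infEdist_le_infEdist_add_edist
        have hsub1 : EMetric.infEdist p Ωᶜ - edist p (p + t • v)
            ≤ EMetric.infEdist (p + t • v) Ωᶜ := tsub_le_iff_right.2 hchain
        have hsub2 : ENNReal.ofReal (2/(n+1 : ℝ)) - ENNReal.ofReal (1/(n+1 : ℝ))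
            ≤ EMetric.infEdist p Ωᶜ - edist p (p + t • v) := tsub_le_tsub hpΩn.1 hedist
        have hsub3 : ENNReal.ofReal (1/(n+1 : ℝ))
            = ENNReal.ofReal (2/(n+1 : ℝ)) - ENNReal.ofReal (1/(n+1 : ℝ)) := by
          rw [← ENNReal.ofReal_sub _ (by positivity : (0:ℝ) ≤ 1/(n+1 : ℝ))]
          congr 1
          ring
        rw [hsub3]
        exact le_trans hsub2 hsub1
      · rw [mem_closedBall_zero_iff]
        have hp2' : ‖p‖ ≤ (n:ℝ)+1 := mem_closedBall_zero_iff.1 hpΩn.2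
        have ht1 : |t| ≤ 1 := ht.le.trans (by rw [div_le_one (by positivity)]; linarith)
        calc ‖p + t • v‖ ≤ ‖p‖ + ‖t • v‖ := norm_add_le _ _
          _ ≤ ((n:ℝ)+1) + 1 := add_le_add hp2' (htv.trans ht1)
          _ = (n:ℝ)+2 := by ring
    have hfp : f p = g p := by
      by_contra hne
      exact hp3 ⟨hKsub n hpK, hne⟩
    have hGp : G p = f p := hfeqG p hpK hfp
    apply Tendsto.congr' _ hp1
    have hmemIoo : Set.Ioo (0:ℝ) (1/(n+1 : ℝ)) ∈ nhdsWithin (0:ℝ) (Set.Ioi 0) :=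
      Ioo_mem_nhdsGT_of_mem ⟨le_refl 0, by positivity⟩
    filter_upwards [hmemIoo] with r hr
    congr 1
    apply setIntegral_congr_ae measurableSet_Ioo
    filter_upwards [hp2] with t ht htIoo
    have habs : |t| < 1/(n+1 : ℝ) :=
      lt_trans (abs_lt.2 ⟨by linarith [htIoo.1], htIoo.2⟩) hr.2
    have hmemK : p + t • v ∈ K n := hKfsub t habs
    have hftv : f (p + t • v) = g (p + t • v) := by
      by_contra hne
      exact ht ⟨hKsub n hmemK, hne⟩
    rw [hfeqG _ hmemK hftv, hGp]
  rw [ae_restrict_iff' hΩm]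
  have hcomb := (ae_ball_iff hΓc).2 fun v hv => ae_all_iff.2 (main v hv)
  filter_upwards [hcomb] with p hp hpΩ v hvΓ ε hε hball
  have hinf : ENNReal.ofReal ε ≤ EMetric.infEdist p Ωᶜ := by
    apply EMetric.le_infEdist.2
    intro y hy
    have hnlt : ¬ dist y p < ε := fun hlt => hy (hball (mem_ball.2 hlt))
    rw [edist_dist]
    exact ENNReal.ofReal_le_ofReal (by rw [dist_comm]; linarith [not_lt.1 hnlt])
  obtain ⟨n, hn⟩ := exists_nat_ge (max ‖p‖ (2/ε))
  have hn1 : ‖p‖ ≤ (n:ℝ) := le_trans (le_max_left _ _) hn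
  have hn2 : 2/ε ≤ (n:ℝ) := le_trans (le_max_right _ _) hn
  have hΩnmem : p ∈ Ωn n := by
    constructor
    · refine le_trans (ENNReal.ofReal_le_ofReal ?_) hinf
      rw [div_le_iff₀ (by positivity)]
      rw [div_le_iff₀ hε] at hn2
      nlinarith [hε.le]
    · rw [mem_closedBall_zero_iff]; linarith
  exact hp v hvΓ n hΩnmem
end

section
/- Let V ⊆ ℝ^m be open, let k : V → ℝ be locally integrable (k ∈ L¹_loc(V) with respect to Lebesgue measure), let w : V → ℝ be continuous, let θ > 0, and let Γ ⊆ B_θ(0) ⊆ ℝ^m be a countable set. For x with B_{4θ}(x) ⊆ V, δ ∈ (0, θ) ∩ ℚ, and γ̇ ∈ Γ, define F_{γ̇,δ,x} : (−1, 1) → ℝ by F_{γ̇,δ,x}(t) = (1 / L^m(closedBall(x, δ))) ∫_{closedBall(x, δ)} w(y + t γ̇) k(y + t γ̇) dL^m(y). Then for Lebesgue-almost every x ∈ {x ∈ V : B_{4θ}(x) ⊆ V} and all δ ∈ (0, θ) ∩ ℚ and γ̇ ∈ Γ, the point t = 0 is a Lebesgue point of F_{γ̇,δ,x}. -/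
open MeasureTheory Metric Filter

/-- Translation of a set integral over a closed ball. -/
lemma setIntegral_closedBall_translate {m : ℕ} (g : EuclideanSpace ℝ (Fin m) → ℝ)
    (x c : EuclideanSpace ℝ (Fin m)) (δ : ℝ) :
    ∫ y in closedBall x δ, g (y + c) = ∫ y in closedBall (x + c) δ, g y := by
  have h := (measurePreserving_add_right (volume : Measure (EuclideanSpace ℝ (Fin m)))
      c).setIntegral_preimage_emb
    (MeasurableEquiv.addRight c).measurableEmbedding g (closedBall (x + c) δ)
  have hpre : (fun y : EuclideanSpace ℝ (Fin m) => y + c) ⁻¹' closedBall (x + c) δ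
      = closedBall x δ := by
    ext y
    simp [mem_closedBall, dist_eq_norm, add_sub_add_right_eq_sub]
  rw [← hpre]
  exact h

/-- For `k ∈ L¹_loc(V)`, `w` continuous, `θ > 0`, and a countable `Γ ⊆ B_θ(0)`:
for a.e. `x` with `B_{4θ}(x) ⊆ V`, all rational `δ ∈ (0, θ)` and all `γ̇ ∈ Γ`, `t = 0` is
a Lebesgue point of
`F(t) = (1/L^m(closedBall x δ)) ∫_{closedBall x δ} w(y + tγ̇) k(y + tγ̇) dy`. -/
theorem lebesgue_point_of_averaged_maps
    (m : ℕ) (V : Set (EuclideanSpace ℝ (Fin m))) (hV : IsOpen V)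
    (k w : EuclideanSpace ℝ (Fin m) → ℝ)
    (hk : LocallyIntegrableOn k V volume)
    (hw : ContinuousOn w V)
    (θ : ℝ) (hθ : 0 < θ)
    (Γ : Set (EuclideanSpace ℝ (Fin m))) (hΓc : Γ.Countable)
    (hΓ : Γ ⊆ ball (0 : EuclideanSpace ℝ (Fin m)) θ) :
    ∀ᵐ x ∂(volume.restrict {x : EuclideanSpace ℝ (Fin m) | ball x (4 * θ) ⊆ V}),
      ∀ δ : ℚ, 0 < (δ : ℝ) → (δ : ℝ) < θ → ∀ γ' ∈ Γ, ∀ F : ℝ → ℝ,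
        (∀ t : ℝ, F t = (volume (closedBall x (δ : ℝ))).toReal⁻¹ *
            ∫ y in closedBall x (δ : ℝ), w (y + t • γ') * k (y + t • γ')) →
        Tendsto (fun r : ℝ =>
            (1 / (2 * r)) * ∫ t in Set.Ioo (-r) r, |F t - F 0|)
          (nhdsWithin 0 (Set.Ioi 0)) (nhds 0) := by
  -- the set of good centers is closed, hence measurable
  have hSclosed : IsClosed {x : EuclideanSpace ℝ (Fin m) | ball x (4 * θ) ⊆ V} := by
    rw [← isOpen_compl_iff, Metric.isOpen_iff]
    intro x hx
    simp only [Set.mem_compl_iff, Set.mem_setOf_eq, Set.not_subset] at hx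
    obtain ⟨y, hy1, hy2⟩ := hx
    rw [mem_ball] at hy1
    refine ⟨4 * θ - dist y x, by linarith, fun z hz => ?_⟩
    simp only [Set.mem_compl_iff, Set.mem_setOf_eq, Set.not_subset]
    refine ⟨y, ?_, hy2⟩
    rw [mem_ball] at hz ⊢
    have h1 : dist y z ≤ dist y x + dist x z := dist_triangle y x z
    have h2 : dist x z = dist z x := dist_comm x z
    linarith
  refine ae_restrict_of_forall_mem hSclosed.measurableSet ?_
  intro x hx δ hδ0 hδθ γ' hγ' F hF
  simp only [Set.mem_setOf_eq] at hx
  have hγ'θ : ‖γ'‖ < θ := by simpa [mem_ball, dist_eq_norm] using hΓ hγ'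
  set g : EuclideanSpace ℝ (Fin m) → ℝ := fun y => w y * k y with hg_def
  have hBsub : closedBall x (2 * θ) ⊆ V := fun z hz =>
    hx (by rw [mem_ball]; rw [mem_closedBall] at hz; linarith)
  -- integrability of g on the big ball
  have hg_int : IntegrableOn g (closedBall x (2 * θ)) volume :=
    IntegrableOn.continuousOn_mul (hw.mono hBsub)
      (hk.integrableOn_compact_subset hBsub (isCompact_closedBall _ _))
      (isCompact_closedBall _ _)
  have hgi : Integrable ((closedBall x (2 * θ)).indicator g) volume :=
    hg_int.integrable_indicator measurableSet_closedBall
  -- the dominating function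
  set bound : EuclideanSpace ℝ (Fin m) → ℝ :=
    (closedBall x (2 * θ)).indicator (fun z => ‖g z‖) with hbound_def
  have hbound_int : Integrable bound volume :=
    IntegrableOn.integrable_indicator hg_int.norm measurableSet_closedBall
  -- for |t| ≤ 1, the translated small ball is inside the big ball
  have hball : ∀ t : ℝ, |t| ≤ 1 →
      closedBall (x + t • γ') (δ : ℝ) ⊆ closedBall x (2 * θ) := by
    intro t ht z hz
    rw [mem_closedBall] at hz ⊢
    have h1 : dist (x + t • γ') x ≤ ‖γ'‖ := by
      rw [dist_eq_norm, add_sub_cancel_left, norm_smul, Real.norm_eq_abs]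
      calc |t| * ‖γ'‖ ≤ 1 * ‖γ'‖ := by gcongr
        _ = ‖γ'‖ := one_mul _
    calc dist z x ≤ dist z (x + t • γ') + dist (x + t • γ') x := dist_triangle _ _ _
      _ ≤ (δ : ℝ) + ‖γ'‖ := add_le_add hz h1
      _ ≤ 2 * θ := by linarith
  -- F in translated form
  have hF' : ∀ t : ℝ, F t = (volume (closedBall x (δ : ℝ))).toReal⁻¹ *
      ∫ y, (closedBall (x + t • γ') (δ : ℝ)).indicator g y := by
    intro t
    rw [hF t, show (∫ y in closedBall x (δ : ℝ), w (y + t • γ') * k (y + t • γ')) =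
      ∫ y in closedBall x (δ : ℝ), g (y + t • γ') from rfl,
      setIntegral_closedBall_translate g x (t • γ') (δ : ℝ),
      integral_indicator measurableSet_closedBall]
  have hone : ∀ᶠ t : ℝ in nhds 0, |t| ≤ 1 := by
    have := eventually_abs_sub_lt (0 : ℝ) one_pos
    filter_upwards [this] with t ht
    rw [sub_zero] at ht
    exact ht.le
  -- continuity of F at 0
  have key : Tendsto (fun t : ℝ => ∫ y, (closedBall (x + t • γ') (δ : ℝ)).indicator g y)
      (nhds 0)
      (nhds (∫ y, (closedBall (x + (0:ℝ) • γ') (δ : ℝ)).indicator g y)) := by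
    refine tendsto_integral_filter_of_dominated_convergence bound ?_ ?_ hbound_int ?_
    · filter_upwards [hone] with t ht
      have h := hgi.aestronglyMeasurable.indicator
        (measurableSet_closedBall (x := x + t • γ') (ε := (δ : ℝ)))
      rwa [Set.indicator_indicator, Set.inter_eq_self_of_subset_left (hball t ht)] at h
    · filter_upwards [hone] with t ht
      refine Filter.Eventually.of_forall fun z => ?_
      rw [norm_indicator_eq_indicator_norm]
      exact Set.indicator_le_indicator_of_subset (hball t ht) (fun a => norm_nonneg _) z
    · have hnull : ∀ᵐ z : EuclideanSpace ℝ (Fin m) ∂volume, dist z x ≠ (δ : ℝ) := by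
        have hs : volume (sphere x (δ : ℝ)) = 0 :=
          Measure.addHaar_sphere_of_ne_zero volume x (ne_of_gt hδ0)
        rw [ae_iff]
        convert hs using 2
        ext z
        simp [Metric.mem_sphere, dist_eq_norm]
      filter_upwards [hnull] with z hz
      have hc : Tendsto (fun t : ℝ => dist z (x + t • γ')) (nhds 0) (nhds (dist z x)) := by
        have hcont : Continuous fun t : ℝ => dist z (x + t • γ') := by fun_prop
        have := hcont.tendsto 0
        simpa using this
      rcases lt_or_gt_of_ne hz with h | h
      · have hev : ∀ᶠ t : ℝ in nhds 0, dist z (x + t • γ') < (δ : ℝ) :=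
          hc.eventually_lt_const h
        have heq : (fun t : ℝ => (closedBall (x + t • γ') (δ : ℝ)).indicator g z)
            =ᶠ[nhds 0] fun _ => g z := by
          filter_upwards [hev] with t ht
          exact Set.indicator_of_mem (mem_closedBall.mpr ht.le) g
        have h0 : (closedBall (x + (0:ℝ) • γ') (δ : ℝ)).indicator g z = g z := by
          refine Set.indicator_of_mem ?_ g
          rw [mem_closedBall]
          simpa using h.le
        rw [h0]
        exact Tendsto.congr' heq.symm tendsto_const_nhds
      · have hev : ∀ᶠ t : ℝ in nhds 0, (δ : ℝ) < dist z (x + t • γ') :=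
          hc.eventually_const_lt h
        have heq : (fun t : ℝ => (closedBall (x + t • γ') (δ : ℝ)).indicator g z)
            =ᶠ[nhds 0] fun _ => (0 : ℝ) := by
          filter_upwards [hev] with t ht
          exact Set.indicator_of_notMem (by rw [mem_closedBall]; exact not_le.mpr ht) g
        have h0 : (closedBall (x + (0:ℝ) • γ') (δ : ℝ)).indicator g z = 0 := by
          refine Set.indicator_of_notMem ?_ g
          rw [mem_closedBall]
          simpa using not_le.mpr h
        rw [h0]
        exact Tendsto.congr' heq.symm tendsto_const_nhds
  have hFeq : F = fun t : ℝ => (volume (closedBall x (δ : ℝ))).toReal⁻¹ *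
      ∫ y, (closedBall (x + t • γ') (δ : ℝ)).indicator g y := funext hF'
  have hcont : Tendsto F (nhds 0) (nhds (F 0)) := by
    rw [hFeq]
    exact key.const_mul _
  -- conclude: continuity at 0 implies Lebesgue point
  rw [Metric.tendsto_nhdsWithin_nhds]
  intro ε hε
  rw [Metric.tendsto_nhds] at hcont
  have h2 := hcont (ε / 2) (by linarith)
  obtain ⟨η, hη0, hη⟩ := Metric.eventually_nhds_iff.mp h2
  refine ⟨min η 1, by positivity, fun r hr hrd => ?_⟩
  rw [Set.mem_Ioi] at hr
  have hrη : r < η := by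
    rw [Real.dist_eq, sub_zero, abs_of_pos hr] at hrd
    exact lt_of_lt_of_le hrd (min_le_left _ _)
  have hnonneg : 0 ≤ ∫ t in Set.Ioo (-r) r, |F t - F 0| :=
    setIntegral_nonneg measurableSet_Ioo (fun t _ => abs_nonneg _)
  have hbnd : ∫ t in Set.Ioo (-r) r, |F t - F 0| ≤ (ε / 2) * (2 * r) := by
    have hb := norm_setIntegral_le_of_norm_le_const (μ := volume) (C := ε / 2)
      (s := Set.Ioo (-r) r) (f := fun t => |F t - F 0|)
      (by rw [Real.volume_Ioo]; exact ENNReal.ofReal_lt_top)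
      (fun t ht => by
        rw [Real.norm_eq_abs, abs_abs]
        have hdt : dist t 0 < η := by
          rw [Real.dist_eq, sub_zero, abs_lt]
          exact ⟨by linarith [ht.1], by linarith [ht.2]⟩
        have := hη hdt
        rw [Real.dist_eq] at this
        exact this.le)
    calc ∫ t in Set.Ioo (-r) r, |F t - F 0|
        ≤ ‖∫ t in Set.Ioo (-r) r, |F t - F 0|‖ := le_abs_self _
      _ ≤ (ε / 2) * (volume (Set.Ioo (-r) r)).toReal := hb
      _ = (ε / 2) * (2 * r) := by
          rw [Real.volume_Ioo, ENNReal.toReal_ofReal (by linarith)]; ring_nf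
  rw [Real.dist_eq, sub_zero]
  have h2r : (0 : ℝ) < 2 * r := by linarith
  rw [abs_of_nonneg (by positivity)]
  calc (1 / (2 * r)) * ∫ t in Set.Ioo (-r) r, |F t - F 0|
      ≤ (1 / (2 * r)) * ((ε / 2) * (2 * r)) := by gcongr
    _ = ε / 2 := by field_simp
    _ < ε := by linarith
end

section
/- Let d ≥ 1, let U ⊆ ℝ^{d+1} be open, let p ∈ U, and let f : U → ℝ be (Fréchet) differentiable at p. Assume that for every timelike future-directed vector v ∈ ℝ^{d+1} (η(v, v) < 0 and v₀ > 0) there exists s > 0 such that the segment {p + t v : t ∈ [−s, s]} lies in U and the map t ↦ f(p + t v) is nondecreasing on [−s, s]. Then the η-gradient ∇_η f(p) := (−∂₀f(p), ∂₁f(p), …, ∂_d f(p)), characterized by η(∇_η f(p), u) = Df_p(u) for all u ∈ ℝ^{d+1}, is either zero or causal and past directed (η(∇_η f(p), ∇_η f(p)) ≤ 0 and its 0-th component is negative). -/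
open Finset Set

/-- The Minkowski bilinear form on `ℝ^{d+1}`:
`η(v, w) = −v₀w₀ + Σ_{i=1}^d vᵢwᵢ`. -/
def minkowski (d : ℕ) (v w : EuclideanSpace ℝ (Fin (d + 1))) : ℝ :=
  (∑ i, v i * w i) - 2 * v 0 * w 0

/-- If `f` is differentiable at `p` and nondecreasing along every timelike
future-directed direction near `p`, then the `η`-gradient of `f` at `p` (i.e. the vector
`g` with `η(g, u) = Df_p(u)` for all `u`) is zero or causal and past directed. -/
theorem causal_function_gradient
    (d : ℕ) (hd : 1 ≤ d) (U : Set (EuclideanSpace ℝ (Fin (d + 1)))) (hU : IsOpen U)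
    (p : EuclideanSpace ℝ (Fin (d + 1))) (hp : p ∈ U)
    (f : EuclideanSpace ℝ (Fin (d + 1)) → ℝ)
    (Df : EuclideanSpace ℝ (Fin (d + 1)) →L[ℝ] ℝ)
    (hdiff : HasFDerivAt f Df p)
    (hmono : ∀ v : EuclideanSpace ℝ (Fin (d + 1)),
      minkowski d v v < 0 → 0 < v 0 → ∃ s : ℝ, 0 < s ∧
        (∀ t ∈ Icc (-s) s, p + t • v ∈ U) ∧
        MonotoneOn (fun t : ℝ => f (p + t • v)) (Icc (-s) s))
    (g : EuclideanSpace ℝ (Fin (d + 1)))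
    (hg : ∀ u : EuclideanSpace ℝ (Fin (d + 1)), minkowski d g u = Df u) :
    g = 0 ∨ (minkowski d g g ≤ 0 ∧ g 0 < 0) := by
  classical
  -- Step 1: the derivative is nonnegative along each timelike future direction.
  have hDf : ∀ v : EuclideanSpace ℝ (Fin (d + 1)),
      minkowski d v v < 0 → 0 < v 0 → 0 ≤ Df v := by
    intro v hv h0
    obtain ⟨s, hs, hUs, hm⟩ := hmono v hv h0
    have hline : HasDerivAt (fun t : ℝ => p + t • v) v 0 := by
      simpa using ((hasDerivAt_id (0 : ℝ)).smul_const v).const_add p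
    have hp0 : p + (0 : ℝ) • v = p := by simp
    have hdiff' : HasFDerivAt f Df ((fun t : ℝ => p + t • v) 0) := by
      simpa [hp0] using hdiff
    have hφ : HasDerivAt (fun t : ℝ => f (p + t • v)) (Df v) 0 :=
      hdiff'.comp_hasDerivAt 0 hline
    rw [hasDerivAt_iff_tendsto_slope] at hφ
    have hφ' : Filter.Tendsto (slope (fun t : ℝ => f (p + t • v)) 0)
        (nhdsWithin 0 (Ioi 0)) (nhds (Df v)) :=
      hφ.mono_left (nhdsWithin_mono _ (fun x hx => ne_of_gt hx))
    refine ge_of_tendsto hφ' ?_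
    filter_upwards [Ioc_mem_nhdsGT_of_mem ⟨le_rfl, hs⟩] with t ht
    have h1 : f (p + (0 : ℝ) • v) ≤ f (p + t • v) := by
      refine hm ⟨neg_nonpos.mpr hs.le, hs.le⟩ ⟨?_, ht.2⟩ ht.1.le
      linarith [ht.1, hs]
    have : slope (fun t : ℝ => f (p + t • v)) 0 t
        = (f (p + t • v) - f (p + (0 : ℝ) • v)) / t := by
      rw [slope_def_field]; ring_nf
    rw [this]
    exact div_nonneg (by linarith) ht.1.le
  set a : ℝ := -(g 0) with ha
  set B : ℝ := ∑ i : Fin d, g i.succ * g i.succ with hB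
  have hB0 : 0 ≤ B := Finset.sum_nonneg fun i _ => mul_self_nonneg _
  -- the test vectors
  set vt : ℝ → EuclideanSpace ℝ (Fin (d + 1)) :=
    fun t => (WithLp.equiv 2 _).symm (fun i => if i = 0 then 1 else t * g i) with hvtdef
  have hvt : ∀ (t : ℝ) (i : Fin (d + 1)), vt t i = if i = 0 then 1 else t * g i :=
    fun t i => rfl
  have hmink1 : ∀ t : ℝ, minkowski d (vt t) (vt t) = t * t * B - 1 := by
    intro t
    have hsum : ∑ i : Fin d, (t * g i.succ) * (t * g i.succ) = t * t * B := by
      rw [hB, Finset.mul_sum]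
      exact Finset.sum_congr rfl fun i _ => by ring
    simp only [minkowski, hvt, Fin.sum_univ_succ, if_pos, Fin.succ_ne_zero, if_neg,
      not_false_iff, reduceIte]
    rw [hsum]; ring
  have hmink2 : ∀ t : ℝ, minkowski d g (vt t) = a + t * B := by
    intro t
    have hsum : ∑ i : Fin d, g i.succ * (t * g i.succ) = t * B := by
      rw [hB, Finset.mul_sum]
      exact Finset.sum_congr rfl fun i _ => by ring
    simp only [minkowski, hvt, Fin.sum_univ_succ, if_pos, Fin.succ_ne_zero, if_neg,
      not_false_iff, reduceIte]
    rw [hsum, ha]; ring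
  have hmink3 : minkowski d g g = B - a * a := by
    simp only [minkowski, Fin.sum_univ_succ, ← hB, ha]
    ring
  have hkey : ∀ t : ℝ, t * t * B < 1 → 0 ≤ a + t * B := by
    intro t ht
    have h1 : minkowski d (vt t) (vt t) < 0 := by rw [hmink1]; linarith
    have h2 : (0 : ℝ) < vt t 0 := by rw [hvt]; simp
    have h3 := hDf _ h1 h2
    rw [← hg, hmink2] at h3
    exact h3
  have ha0 : 0 ≤ a := by
    have := hkey 0 (by norm_num)
    simpa using this
  have hBa : B ≤ a * a := by
    by_contra hcon
    push_neg at hcon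
    set σ : ℝ := Real.sqrt B with hσ
    have hB' : 0 < B := lt_of_le_of_lt (mul_self_nonneg a) hcon
    have hσpos : 0 < σ := Real.sqrt_pos.mpr hB'
    have hσsq : σ * σ = B := Real.mul_self_sqrt hB0
    have haσ : a < σ := by nlinarith
    set q : ℝ := (a + σ) / (2 * B) with hq
    have hqB : q * B = (a + σ) / 2 := by
      rw [hq, div_mul_eq_mul_div, div_eq_div_iff (mul_pos two_pos hB').ne' two_ne_zero]
      ring
    have hside : (-q) * (-q) * B < 1 := by
      have hqq : q * q * B = (a + σ) * (a + σ) / (4 * B) := by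
        have h2B : (2 * B) ≠ 0 := (mul_pos two_pos hB').ne'
        rw [hq, div_mul_div_comm, div_mul_eq_mul_div,
          div_eq_div_iff (mul_ne_zero h2B h2B) (mul_pos (by norm_num : (0:ℝ) < 4) hB').ne']
        ring
      have hlt : (a + σ) * (a + σ) < 4 * B := by nlinarith
      have : (a + σ) * (a + σ) / (4 * B) < 1 := by
        rw [div_lt_one (by linarith)]
        exact hlt
      nlinarith [this, hqq]
    have hfin := hkey (-q) hside
    have : 0 ≤ a - (a + σ) / 2 := by
      have : (-q) * B = -((a + σ) / 2) := by rw [neg_mul, hqB]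
      linarith [hfin, this.ge, this.le]
    linarith
  rcases eq_or_lt_of_le ha0 with h | h
  · left
    have hBz : B = 0 := le_antisymm (by nlinarith) hB0
    have hterm : ∀ i : Fin d, g i.succ = 0 := by
      intro i
      have h2 := (Finset.sum_eq_zero_iff_of_nonneg
        (fun j (_ : j ∈ Finset.univ) => mul_self_nonneg (g j.succ))).mp (hB ▸ hBz) i
        (Finset.mem_univ i)
      exact mul_self_eq_zero.mp h2
    have hg0 : g 0 = 0 := by
      have : a = 0 := h.symm
      rw [ha] at this; linarith
    ext i
    refine Fin.cases ?_ ?_ i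
    · simpa using hg0
    · intro j
      simpa using hterm j
  · right
    constructor
    · rw [hmink3]; nlinarith
    · rw [ha] at h; linarith
end

section
/- Let U ⊆ ℝ^n be open, let v ∈ ℝ^n, and let f : U → ℝ be Lebesgue measurable, locally integrable, and nondecreasing in direction v, i.e., whenever y ∈ U, t ≥ 0, and the segment {y + r v : r ∈ [0, t]} lies in U, then f(y) ≤ f(y + t v). Let μ be a finite nonnegative Borel measure on U such that for every continuous function φ : U → ℝ with compact support in U, ∫_U φ dμ = lim_{h ↘ 0} ∫_U φ(y) (f(y + h v) − f(y)) / h dL^n(y). Let q ∈ U and δ, s > 0 be such that the set ⋃_{t ∈ [−2s, 2s]} (closedBall(q, δ) + t v) is contained in U. Then ∫_{−s}^{s} μ(closedBall(q, δ) + t v) dt ≥ ∫_{closedBall(q, δ)} (f(y + s v) − f(y − s v)) dL^n(y). -/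
open MeasureTheory Metric Set Filter

abbrev EE (n : ℕ) := EuclideanSpace ℝ (Fin n)

noncomputable def ftcBump {X : Type*} [PseudoMetricSpace X] (q : X) (δ ε : ℝ) (y : X) : ℝ :=
  max 0 (min 1 ((δ - dist y q) / ε))

lemma ftcBump_cont {X : Type*} [PseudoMetricSpace X] (q : X) (δ ε : ℝ) :
    Continuous (ftcBump q δ ε) := by
  unfold ftcBump; fun_prop

lemma ftcBump_nonneg {X : Type*} [PseudoMetricSpace X] (q : X) (δ ε : ℝ) (y : X) :
    0 ≤ ftcBump q δ ε y := le_max_left _ _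

lemma ftcBump_le_one {X : Type*} [PseudoMetricSpace X] (q : X) (δ ε : ℝ) (y : X) :
    ftcBump q δ ε y ≤ 1 := max_le zero_le_one (min_le_left _ _)

lemma ftcBump_abs_le_one {X : Type*} [PseudoMetricSpace X] (q : X) (δ ε : ℝ) (y : X) :
    |ftcBump q δ ε y| ≤ 1 :=
  abs_le.2 ⟨by linarith [ftcBump_nonneg q δ ε y], ftcBump_le_one q δ ε y⟩

lemma ftcBump_eq_one {X : Type*} [PseudoMetricSpace X] (q : X) {δ ε : ℝ} (hε : 0 < ε)
    {y : X} (h : dist y q ≤ δ - ε) : ftcBump q δ ε y = 1 := by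
  have : (1:ℝ) ≤ (δ - dist y q) / ε := (one_le_div hε).2 (by linarith)
  rw [ftcBump, min_eq_left this, max_eq_right zero_le_one]

lemma ftcBump_eq_zero {X : Type*} [PseudoMetricSpace X] (q : X) {δ ε : ℝ} (hε : 0 < ε)
    {y : X} (h : δ ≤ dist y q) : ftcBump q δ ε y = 0 := by
  have : (δ - dist y q) / ε ≤ 0 := div_nonpos_of_nonpos_of_nonneg (by linarith) hε.le
  simp [ftcBump]
  right; linarith

lemma ftcBump_support {X : Type*} [PseudoMetricSpace X] (q : X) {δ ε : ℝ} (hε : 0 < ε)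
    {y : X} (h : ftcBump q δ ε y ≠ 0) : y ∈ closedBall q δ := by
  by_contra hy
  exact h (ftcBump_eq_zero q hε (le_of_lt (by simpa [closedBall, dist_comm] using hy)))

set_option maxHeartbeats 1000000 in
theorem ftc_key
    (n : ℕ) (U : Set (EuclideanSpace ℝ (Fin n))) (hU : IsOpen U)
    (v : EuclideanSpace ℝ (Fin n)) (f : EuclideanSpace ℝ (Fin n) → ℝ)
    (hmeas : AEMeasurable f (volume.restrict U))
    (hloc : LocallyIntegrableOn f U volume)
    (hmono : ∀ y ∈ U, ∀ t : ℝ, 0 ≤ t → (∀ r ∈ Icc (0 : ℝ) t, y + r • v ∈ U) →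
      f y ≤ f (y + t • v))
    (μ : Measure (EuclideanSpace ℝ (Fin n))) [IsFiniteMeasure μ]
    (hweak : ∀ φ : EuclideanSpace ℝ (Fin n) → ℝ, Continuous φ → HasCompactSupport φ →
      tsupport φ ⊆ U →
      Tendsto (fun h : ℝ => ∫ y, φ y * ((f (y + h • v) - f y) / h))
        (nhdsWithin 0 (Ioi 0)) (nhds (∫ y, φ y ∂μ)))
    (q : EuclideanSpace ℝ (Fin n)) (δ s ε : ℝ) (hδ : 0 < δ) (hs : 0 < s)
    (hsub : ∀ t ∈ Icc (-(2 * s)) (2 * s), closedBall (q + t • v) δ ⊆ U)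
    (hε : 0 < ε) (hεδ : ε < δ) :
    ∫ y in closedBall q (δ - ε), (f (y + s • v) - f (y - s • v)) ≤
      ∫ t in Icc (-s) s, (μ (closedBall (q + t • v) δ)).toReal := by
  set ψ : (EE n) → ℝ := ftcBump q δ ε with hψdef
  set φ : (EE n) → ℝ := fun y => ∫ t in (-s)..s, ψ (y - t • v) with hφdef
  set ft : (EE n) → ℝ := U.indicator f with hftdef
  set K₀ : Set (EE n) := (fun p : ℝ × (EE n) => p.2 + p.1 • v) '' ((Icc (-s) s) ×ˢ closedBall q δ)
    with hK₀def
  set K : Set (EE n) := (fun p : ℝ × (EE n) => p.2 + p.1 • v) '' ((Icc (-(2*s)) (2*s)) ×ˢ closedBall q δ)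
    with hKdef
  have hψc : Continuous ψ := ftcBump_cont q δ ε
  have hcont2 : ∀ y : (EE n), Continuous fun t : ℝ => ψ (y - t • v) := by
    intro y; fun_prop
  -- membership lemmas for K
  have hKmem : ∀ t ∈ Icc (-(2*s)) (2*s), ∀ y : (EE n), y ∈ closedBall (q + t • v) δ → y ∈ K := by
    intro t ht y hy
    refine ⟨(t, y - t • v), ⟨ht, ?_⟩, by simp⟩
    rw [mem_closedBall, show q = (q + t • v) - t • v by abel, dist_sub_right]
    exact hy
  have hKU : K ⊆ U := by
    rintro _ ⟨⟨t, z⟩, ⟨ht, hz⟩, rfl⟩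
    exact hsub t ht (by simpa [mem_closedBall, dist_add_right] using hz)
  have hK₀K : K₀ ⊆ K := by
    apply image_mono
    apply Set.prod_mono_left
    intro t ht
    exact ⟨by linarith [ht.1], by linarith [ht.2]⟩
  have hshift : ∀ (y : (EE n)) (h : ℝ), h ∈ Icc (-s) s → y ∈ K₀ → y + h • v ∈ K := by
    rintro _ h hh ⟨⟨t, z⟩, ⟨ht, hz⟩, rfl⟩
    refine ⟨(t + h, z), ⟨⟨?_, ?_⟩, hz⟩, by simp; module⟩
    · have := ht.1; have := hh.1; simp only [mem_Icc] at *; linarith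
    · have := ht.2; have := hh.2; simp only [mem_Icc] at *; linarith
  have hKco : IsCompact K := by
    apply ((isCompact_Icc).prod (isCompact_closedBall q δ)).image
    fun_prop
  have hKmeas : MeasurableSet K := hKco.isClosed.measurableSet
  -- support of φ
  have hφsupp : Function.support φ ⊆ K₀ := by
    intro y hy
    by_contra hyK
    apply hy
    show φ y = 0
    have heq : EqOn (fun t : ℝ => ψ (y - t • v)) (fun _ => (0:ℝ)) (uIcc (-s) s) := by
      intro t ht
      by_contra h0
      apply hyK
      have hyb : y - t • v ∈ closedBall q δ := ftcBump_support q hε h0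
      rw [uIcc_of_le (by linarith : -s ≤ s)] at ht
      exact ⟨(t, y - t • v), ⟨ht, hyb⟩, by simp⟩
    calc φ y = ∫ t in (-s)..s, (0:ℝ) := intervalIntegral.integral_congr heq
    _ = 0 := by simp
  have hφ0 : ∀ y : (EE n), y ∉ K₀ → φ y = 0 := by
    intro y hy
    by_contra h0
    exact hy (hφsupp h0)
  -- basic integrability
  have hftmeas : AEStronglyMeasurable ft volume :=
    ((aemeasurable_indicator_iff hU.measurableSet).2 hmeas).aestronglyMeasurable
  have hftK : IntegrableOn ft K volume := by
    apply (hloc.integrableOn_compact_subset hKU hKco).congr_fun (fun y hy => ?_) hKmeas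
    exact (indicator_of_mem (hKU hy) f).symm
  have hmul : ∀ (c : (EE n) → ℝ) (C : ℝ), Continuous c → Function.support c ⊆ K →
      (∀ y, |c y| ≤ C) → Integrable (fun y => c y * ft y) volume := by
    intro c C hc hcsupp hC
    have heq : (fun y => c y * ft y) = K.indicator (fun y => c y * ft y) := by
      funext y
      by_cases hy : y ∈ K
      · rw [indicator_of_mem hy]
      · rw [indicator_of_notMem hy]
        have : c y = 0 := by
          by_contra h0; exact hy (hcsupp h0)
        simp [this]
    rw [heq, integrable_indicator_iff hKmeas]
    exact hftK.bdd_mul hc.aestronglyMeasurable (ae_of_all _ fun y => by simpa using hC y)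
  -- bounds
  have hφbdd : ∀ y : (EE n), |φ y| ≤ 2 * s := by
    intro y
    have := intervalIntegral.norm_integral_le_of_norm_le_const
      (C := 1) (f := fun t => ψ (y - t • v)) (a := -s) (b := s)
      (fun t _ => by simpa using ftcBump_abs_le_one q δ ε _)
    calc |φ y| = ‖∫ t in (-s)..s, ψ (y - t • v)‖ := rfl
      _ ≤ 1 * |s - -s| := this
      _ = 2 * s := by rw [show s - -s = 2*s by ring, abs_of_pos (by linarith)]; ring
  -- interval integrability
  have hFint : ∀ (y : (EE n)) (a b : ℝ), IntervalIntegrable (fun t => ψ (y - t • v)) volume a b :=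
    fun y a b => (hcont2 y).intervalIntegrable a b
  -- shift formula for φ
  have hφshift : ∀ (y : (EE n)) (h : ℝ),
      φ (y - h • v) = ∫ t in (-s + h)..(s + h), ψ (y - t • v) := by
    intro y h
    show (∫ t in (-s)..s, ψ (y - h • v - t • v)) = _
    have hrw : ∀ t : ℝ, y - h • v - t • v = y - (t + h) • v := by intro t; module
    simp_rw [hrw]
    exact intervalIntegral.integral_comp_add_right (fun t => ψ (y - t • v)) h
  have hφdiff : ∀ (y : (EE n)) (h : ℝ),
      φ (y - h • v) - φ y =
        (∫ t in s..(s + h), ψ (y - t • v)) - ∫ t in (-s)..(-s + h), ψ (y - t • v) := by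
    intro y h
    rw [hφshift y h]
    have h1 : (∫ t in (-s + h)..(s + h), ψ (y - t • v)) =
        (∫ t in (-s)..(s + h), ψ (y - t • v)) - ∫ t in (-s)..(-s + h), ψ (y - t • v) :=
      (intervalIntegral.integral_interval_sub_left (hFint y _ _) (hFint y _ _)).symm
    have h2 : (∫ t in (-s)..(s + h), ψ (y - t • v)) =
        (∫ t in (-s)..s, ψ (y - t • v)) + ∫ t in s..(s + h), ψ (y - t • v) :=
      (intervalIntegral.integral_add_adjacent_intervals (hFint y _ _) (hFint y _ _)).symm
    rw [h1, h2]
    have : φ y = ∫ t in (-s)..s, ψ (y - t • v) := rfl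
    rw [this]; ring
  -- pointwise limit of difference quotients
  have hptwise : ∀ y : (EE n), Tendsto (fun h : ℝ => (φ (y - h • v) - φ y) / h)
      (nhdsWithin 0 (Ioi 0)) (nhds (ψ (y - s • v) - ψ (y + s • v))) := by
    intro y
    have hF : ∀ u : ℝ, HasDerivAt (fun u => ∫ t in (-s)..u, ψ (y - t • v))
        (ψ (y - u • v)) u := by
      intro u
      exact intervalIntegral.integral_hasDerivAt_right (hFint y _ _)
        ⟨univ, univ_mem, ((hcont2 y).aestronglyMeasurable).restrict⟩
        (hcont2 y).continuousAt
    have h1 : HasDerivAt (fun h : ℝ => ∫ t in (-s)..(s + h), ψ (y - t • v))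
        (ψ (y - s • v)) 0 := by
      have := (hF (s + 0)).comp 0 ((hasDerivAt_id (0:ℝ)).const_add s)
      simpa [Function.comp_def] using this
    have h2 : HasDerivAt (fun h : ℝ => ∫ t in (-s)..(-s + h), ψ (y - t • v))
        (ψ (y + s • v)) 0 := by
      have := (hF (-s + 0)).comp 0 ((hasDerivAt_id (0:ℝ)).const_add (-s))
      simpa [Function.comp_def, neg_smul, sub_neg_eq_add] using this
    have hG : HasDerivAt (fun h : ℝ => φ (y - h • v))
        (ψ (y - s • v) - ψ (y + s • v)) 0 := by
      apply (h1.sub h2).congr_of_eventuallyEq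
      filter_upwards with h
      have := hφdiff y h
      have h0 : φ (y - h • v) = φ y + ((∫ t in (-s)..(s+h), ψ (y - t • v))
          - ∫ t in (-s)..(-s+h), ψ (y - t • v)) - (∫ t in (-s)..s, ψ (y - t • v)) := by
        have h1' : (∫ t in (-s + h)..(s + h), ψ (y - t • v)) =
            (∫ t in (-s)..(s + h), ψ (y - t • v)) - ∫ t in (-s)..(-s + h), ψ (y - t • v) :=
          (intervalIntegral.integral_interval_sub_left (hFint y _ _) (hFint y _ _)).symm
        rw [hφshift y h, h1']
        have : φ y = ∫ t in (-s)..s, ψ (y - t • v) := rfl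
        rw [this]; ring
      rw [h0]
      have : φ y = ∫ t in (-s)..s, ψ (y - t • v) := rfl
      rw [this, Pi.sub_apply]; ring
    have hslope := hasDerivAt_iff_tendsto_slope.1 hG
    have hmono' : nhdsWithin (0:ℝ) (Ioi 0) ≤ nhdsWithin 0 {(0:ℝ)}ᶜ :=
      nhdsWithin_mono 0 (fun x hx => by simpa using ne_of_gt hx)
    apply (hslope.mono_left hmono').congr
    intro h
    rw [slope_def_field]
    simp [div_eq_mul_inv, mul_comm]
  -- φ is continuous with compact support in U
  have hφc : Continuous φ := by
    apply intervalIntegral.continuous_parametric_intervalIntegral_of_continuous'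
      (f := fun (y : (EE n)) (t : ℝ) => ψ (y - t • v)) (μ := volume) ?_ (-s) s
    have : Continuous fun p : (EE n) × ℝ => ψ (p.1 - p.2 • v) := by fun_prop
    exact this
  have hφcs : HasCompactSupport φ :=
    HasCompactSupport.intro hKco (fun y hy => hφ0 y (fun h => hy (hK₀K h)))
  have htsupp : tsupport φ ⊆ U :=
    (closure_minimal (hφsupp.trans hK₀K) hKco.isClosed).trans hKU
  -- the dominated convergence limit
  have hB : Tendsto (fun h : ℝ => ∫ y, ft y * ((φ (y - h • v) - φ y) / h))
      (nhdsWithin 0 (Ioi 0))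
      (nhds (∫ y, ft y * (ψ (y - s • v) - ψ (y + s • v)))) := by
    apply tendsto_integral_filter_of_dominated_convergence
      (bound := K.indicator (fun y => 2 * |ft y|))
    · filter_upwards with h
      exact hftmeas.mul ((((hφc.comp (by fun_prop)).sub hφc).div_const h).aestronglyMeasurable)
    · filter_upwards [Ioc_mem_nhdsGT_of_mem (by constructor <;> [exact le_refl 0; exact hs])]
        with h hh
      apply ae_of_all
      intro y
      by_cases hy : y ∈ K
      · rw [indicator_of_mem hy]
        have hq2 : |φ (y - h • v) - φ y| ≤ 2 * h := by
          rw [hφdiff y h]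
          have e1 : ‖∫ t in s..(s + h), ψ (y - t • v)‖ ≤ 1 * |s + h - s| :=
            intervalIntegral.norm_integral_le_of_norm_le_const
              (fun t _ => by simpa using ftcBump_abs_le_one q δ ε _)
          have e2 : ‖∫ t in (-s)..(-s + h), ψ (y - t • v)‖ ≤ 1 * |(-s + h) - (-s)| :=
            intervalIntegral.norm_integral_le_of_norm_le_const
              (fun t _ => by simpa using ftcBump_abs_le_one q δ ε _)
          simp only [Real.norm_eq_abs] at e1 e2
          have hh0 : |h| = h := abs_of_pos hh.1
          have e1' : |∫ t in s..(s + h), ψ (y - t • v)| ≤ h := by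
            rw [show s + h - s = h by ring, hh0] at e1; linarith
          have e2' : |∫ t in (-s)..(-s + h), ψ (y - t • v)| ≤ h := by
            rw [show -s + h - -s = h by ring, hh0] at e2; linarith
          calc |(∫ t in s..(s + h), ψ (y - t • v)) - ∫ t in (-s)..(-s + h), ψ (y - t • v)|
              ≤ |∫ t in s..(s + h), ψ (y - t • v)| + |∫ t in (-s)..(-s + h), ψ (y - t • v)| :=
                abs_sub _ _
            _ ≤ 2 * h := by linarith
        have hq : |(φ (y - h • v) - φ y) / h| ≤ 2 := by
          rw [abs_div, abs_of_pos hh.1, div_le_iff₀ hh.1]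
          linarith
        calc ‖ft y * ((φ (y - h • v) - φ y) / h)‖ = |ft y| * |(φ (y - h • v) - φ y) / h| := by
              rw [Real.norm_eq_abs, abs_mul]
          _ ≤ |ft y| * 2 := by
              apply mul_le_mul_of_nonneg_left hq (abs_nonneg _)
          _ = 2 * |ft y| := by ring
      · have h1 : φ y = 0 := hφ0 y (fun hmem => hy (hK₀K hmem))
        have h2 : φ (y - h • v) = 0 := by
          apply hφ0
          intro hmem
          apply hy
          have := hshift (y - h • v) h ⟨by linarith [hh.1], hh.2⟩ hmem
          simpa using this
        simp [h1, h2, indicator_of_notMem hy]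
    · rw [integrable_indicator_iff hKmeas]
      exact (hftK.abs).const_mul 2
    · apply ae_of_all
      intro y
      exact (hptwise y).const_mul (ft y)
  -- A = B eventually
  have hIccmem : ∀ h ∈ Ioc (0:ℝ) s, h ∈ Icc (-s) s := by
    intro h hh; exact ⟨by linarith [hh.1], hh.2⟩
  have hAB : ∀ h ∈ Ioc (0:ℝ) s,
      (∫ y, φ y * ((f (y + h • v) - f y) / h)) =
        ∫ y, ft y * ((φ (y - h • v) - φ y) / h) := by
    intro h hh
    have hsupp1 : Function.support (fun z : (EE n) => φ (z - h • v) / h) ⊆ K := by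
      intro z hz
      have : φ (z - h • v) ≠ 0 := by
        intro h0; apply hz; show φ (z - h • v) / h = 0; simp [h0]
      have hmem : z - h • v ∈ K₀ := hφsupp this
      have := hshift (z - h • v) h (hIccmem h hh) hmem
      simpa using this
    have hsupp2 : Function.support (fun z : (EE n) => φ z / h) ⊆ K := by
      intro z hz
      have : φ z ≠ 0 := by intro h0; apply hz; show φ z / h = 0; simp [h0]
      exact hK₀K (hφsupp this)
    have hint1 : Integrable (fun z => (φ (z - h • v) / h) * ft z) volume := by
      apply hmul _ (2 * s / h) (by fun_prop) hsupp1
      intro z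
      rw [abs_div, abs_of_pos hh.1]
      exact (div_le_div_iff_of_pos_right hh.1).2 (hφbdd _)
    have hint2 : Integrable (fun z => (φ z / h) * ft z) volume := by
      apply hmul _ (2 * s / h) (by fun_prop) hsupp2
      intro z
      rw [abs_div, abs_of_pos hh.1]
      exact (div_le_div_iff_of_pos_right hh.1).2 (hφbdd _)
    have hint1' : Integrable (fun y => (φ y / h) * ft (y + h • v)) volume := by
      have := hint1.comp_add_right (h • v)
      simpa using this
    calc (∫ y, φ y * ((f (y + h • v) - f y) / h))
        = ∫ y, ((φ y / h) * ft (y + h • v) - (φ y / h) * ft y) := by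
          congr 1; funext y
          by_cases hy : φ y = 0
          · simp [hy]
          · have hyK₀ : y ∈ K₀ := hφsupp hy
            have hyU : y ∈ U := hKU (hK₀K hyK₀)
            have hyU' : y + h • v ∈ U := hKU (hshift y h (hIccmem h hh) hyK₀)
            rw [hftdef]
            rw [indicator_of_mem hyU' f, indicator_of_mem hyU f]
            ring
      _ = (∫ y, (φ y / h) * ft (y + h • v)) - ∫ y, (φ y / h) * ft y := integral_sub hint1' hint2
      _ = (∫ z, (φ (z - h • v) / h) * ft z) - ∫ y, (φ y / h) * ft y := by
          congr 1
          rw [← integral_add_right_eq_self (fun z => (φ (z - h • v) / h) * ft z) (h • v)]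
          simp
      _ = ∫ z, ((φ (z - h • v) / h) * ft z - (φ z / h) * ft z) := (integral_sub hint1 hint2).symm
      _ = ∫ z, ft z * ((φ (z - h • v) - φ z) / h) := by
          congr 1; funext z; ring
  -- identify the two limits
  have hA := hweak φ hφc hφcs htsupp
  have key1 : (∫ y, φ y ∂μ) = ∫ y, ft y * (ψ (y - s • v) - ψ (y + s • v)) := by
    apply tendsto_nhds_unique hA
    apply hB.congr'
    filter_upwards [Ioc_mem_nhdsGT_of_mem (by constructor <;> [exact le_refl 0; exact hs])]
      with h hh
    exact (hAB h hh).symm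
  -- change of variables
  have hsIcc : (s : ℝ) ∈ Icc (-(2*s)) (2*s) := ⟨by linarith, by linarith⟩
  have hsIcc' : (-s : ℝ) ∈ Icc (-(2*s)) (2*s) := ⟨by linarith, by linarith⟩
  have hsuppA : Function.support (fun y : (EE n) => ψ (y - s • v)) ⊆ K := by
    intro y hy
    have hyb : y - s • v ∈ closedBall q δ := ftcBump_support q hε hy
    apply hKmem s hsIcc
    rw [mem_closedBall, show q + s • v = (q + s • v) by rfl]
    rw [show y = (y - s • v) + s • v by abel, dist_add_right]
    exact hyb
  have hsuppB : Function.support (fun y : (EE n) => ψ (y + s • v)) ⊆ K := by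
    intro y hy
    have hyb : y + s • v ∈ closedBall q δ := ftcBump_support q hε hy
    apply hKmem (-s) hsIcc' y
    rw [mem_closedBall]
    have e : dist y (q + (-s) • v) = dist (y + s • v) q := by
      rw [dist_eq_norm, dist_eq_norm]
      congr 1
      module
    rw [e]
    exact hyb
  have hintA : Integrable (fun y => ψ (y - s • v) * ft y) volume :=
    hmul _ 1 (by fun_prop) hsuppA (fun y => ftcBump_abs_le_one q δ ε _)
  have hintB : Integrable (fun y => ψ (y + s • v) * ft y) volume :=
    hmul _ 1 (by fun_prop) hsuppB (fun y => ftcBump_abs_le_one q δ ε _)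
  have hintA' : Integrable (fun z => ψ z * ft (z + s • v)) volume := by
    have := hintA.comp_add_right (s • v)
    simpa using this
  have hintB' : Integrable (fun z => ψ z * ft (z - s • v)) volume := by
    have := hintB.comp_add_right (-(s • v))
    simpa [sub_eq_add_neg] using this
  have cov1 : (∫ y, ψ (y - s • v) * ft y) = ∫ z, ψ z * ft (z + s • v) := by
    have := integral_add_right_eq_self (μ := volume) (fun y => ψ (y - s • v) * ft y) (s • v)
    rw [← this]
    simp
  have cov2 : (∫ y, ψ (y + s • v) * ft y) = ∫ z, ψ z * ft (z - s • v) := by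
    have := integral_add_right_eq_self (μ := volume) (fun y => ψ (y + s • v) * ft y) (-(s • v))
    rw [← this]
    simp [sub_eq_add_neg]
  have key2 : (∫ y, ft y * (ψ (y - s • v) - ψ (y + s • v))) =
      ∫ z, ψ z * (ft (z + s • v) - ft (z - s • v)) := by
    have e1 : (fun y => ft y * (ψ (y - s • v) - ψ (y + s • v))) =
        fun y => ψ (y - s • v) * ft y - ψ (y + s • v) * ft y := by funext y; ring
    have e2 : (fun z => ψ z * (ft (z + s • v) - ft (z - s • v))) =
        fun z => ψ z * ft (z + s • v) - ψ z * ft (z - s • v) := by funext z; ring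
    rw [e1, e2, integral_sub hintA hintB, cov1, cov2, ← integral_sub hintA' hintB']
  -- nonnegativity of the integrand on the ball
  have hg0 : ∀ z ∈ closedBall q δ, 0 ≤ ft (z + s • v) - ft (z - s • v) := by
    intro z hz
    have h1 : ∀ r ∈ Icc (0:ℝ) (2*s), (z - s • v) + r • v ∈ U := by
      intro r hr
      have hmem : (z - s • v) + r • v ∈ closedBall (q + (r - s) • v) δ := by
        rw [show (z - s • v) + r • v = z + (r - s) • v by module, mem_closedBall,
          dist_add_right]
        exact hz
      exact hsub (r - s) ⟨by linarith [hr.1], by linarith [hr.2]⟩ hmem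
    have hzU2 : z - s • v ∈ U := by
      have := h1 0 ⟨le_refl 0, by linarith⟩
      simpa using this
    have hzU1 : z + s • v ∈ U := by
      have := h1 (2*s) ⟨by linarith, le_refl _⟩
      rwa [show (z - s • v) + (2*s) • v = z + s • v by module] at this
    have h2 := hmono (z - s • v) hzU2 (2*s) (by linarith) h1
    rw [show (z - s • v) + (2*s) • v = z + s • v by module] at h2
    rw [hftdef]
    rw [indicator_of_mem hzU1 f, indicator_of_mem hzU2 f]
    linarith
  have hintg : Integrable (fun z => ψ z * (ft (z + s • v) - ft (z - s • v))) volume := by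
    have e2 : (fun z => ψ z * (ft (z + s • v) - ft (z - s • v))) =
        fun z => ψ z * ft (z + s • v) - ψ z * ft (z - s • v) := by funext z; ring
    rw [e2]
    exact hintA'.sub hintB'
  -- lower bound
  have low1 : (∫ z in closedBall q (δ - ε), (f (z + s • v) - f (z - s • v))) ≤
      ∫ z, ψ z * (ft (z + s • v) - ft (z - s • v)) := by
    have e0 : (∫ z in closedBall q (δ - ε), (f (z + s • v) - f (z - s • v))) =
        ∫ z in closedBall q (δ - ε), ψ z * (ft (z + s • v) - ft (z - s • v)) := by
      apply setIntegral_congr_fun measurableSet_closedBall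
      intro z hz
      have hψ1 : ψ z = 1 := ftcBump_eq_one q hε (by simpa [mem_closedBall] using hz)
      have hz' : z ∈ closedBall q δ := closedBall_subset_closedBall (by linarith) hz
      have hzU1 : z + s • v ∈ U := by
        apply hsub s hsIcc
        rw [mem_closedBall, dist_add_right]; exact hz'
      have hzU2 : z - s • v ∈ U := by
        apply hsub (-s) hsIcc'
        rw [mem_closedBall, show q + (-s) • v = q - s • v by module,
          show z - s • v = z - s • v by rfl]
        rw [show z - s • v = z + (-(s • v)) by module, show q - s • v = q + (-(s • v)) by module,
          dist_add_right]
        exact hz'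
      show f (z + s • v) - f (z - s • v) = ψ z * (ft (z + s • v) - ft (z - s • v))
      rw [hψ1, one_mul, hftdef, indicator_of_mem hzU1 f, indicator_of_mem hzU2 f]
    rw [e0]
    have step1 : (∫ z in closedBall q (δ - ε), ψ z * (ft (z + s • v) - ft (z - s • v))) ≤
        ∫ z in closedBall q δ, ψ z * (ft (z + s • v) - ft (z - s • v)) := by
      apply setIntegral_mono_set hintg.integrableOn
      · rw [EventuallyLE, ae_restrict_iff' measurableSet_closedBall]
        apply ae_of_all
        intro z hz
        exact mul_nonneg (ftcBump_nonneg q δ ε z) (hg0 z hz)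
      · exact HasSubset.Subset.eventuallyLE (closedBall_subset_closedBall (by linarith))
    have step2 : (∫ z in closedBall q δ, ψ z * (ft (z + s • v) - ft (z - s • v))) =
        ∫ z, ψ z * (ft (z + s • v) - ft (z - s • v)) := by
      apply setIntegral_eq_integral_of_forall_compl_eq_zero
      intro z hz
      have : ψ z = 0 := ftcBump_eq_zero q hε
        (le_of_lt (by simpa [mem_closedBall] using hz))
      simp [this]
    linarith
  -- Fubini upper bound
  have hup : (∫ y, φ y ∂μ) ≤ ∫ t in Icc (-s) s, (μ (closedBall (q + t • v) δ)).toReal := by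
    haveI : IsFiniteMeasure (volume.restrict (Ioc (-s) s)) :=
      ⟨by rw [Measure.restrict_apply_univ]; exact measure_Ioc_lt_top⟩
    have hswap : (∫ y, φ y ∂μ) = ∫ t in Ioc (-s) s, (∫ y, ψ (y - t • v) ∂μ) := by
      have hrw : ∀ y : (EE n), φ y = ∫ t in Ioc (-s) s, ψ (y - t • v) := fun y =>
        intervalIntegral.integral_of_le (by linarith)
      simp_rw [hrw]
      apply integral_integral_swap
      apply Integrable.mono' (g := fun _ => (1:ℝ)) (integrable_const 1)
      · apply Continuous.aestronglyMeasurable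
        fun_prop
      · apply ae_of_all
        rintro ⟨y, t⟩
        simpa using ftcBump_abs_le_one q δ ε _
    have houtmeas : Measurable (fun t : ℝ => μ (closedBall (q + t • v) δ)) := by
      have hS : MeasurableSet {p : ℝ × (EE n) | p.2 ∈ closedBall (q + p.1 • v) δ} := by
        have hcl : IsClosed {p : ℝ × (EE n) | dist p.2 (q + p.1 • v) ≤ δ} := by
          apply isClosed_le (by fun_prop) continuous_const
        exact hcl.measurableSet
      have := measurable_measure_prodMk_left (ν := μ) hS
      convert this using 2 with t
      rfl
    have houtint : IntegrableOn (fun t : ℝ => (μ (closedBall (q + t • v) δ)).toReal)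
        (Icc (-s) s) volume := by
      apply Integrable.mono' (g := fun _ => (μ univ).toReal)
        (integrable_const _)
      · exact (houtmeas.ennreal_toReal).aestronglyMeasurable
      · apply ae_of_all
        intro t
        rw [Real.norm_eq_abs, abs_of_nonneg ENNReal.toReal_nonneg]
        exact ENNReal.toReal_mono (measure_ne_top μ _) (measure_mono (subset_univ _))
    have hinner_cont : Continuous fun t : ℝ => ∫ y, ψ (y - t • v) ∂μ := by
      apply continuous_of_dominated (bound := fun _ => (1:ℝ))
      · intro t
        apply Continuous.aestronglyMeasurable
        fun_prop
      · intro t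
        apply ae_of_all
        intro y
        simpa using ftcBump_abs_le_one q δ ε _
      · exact integrable_const 1
      · apply ae_of_all
        intro y
        fun_prop
    have hstep1 : (∫ t in Ioc (-s) s, (∫ y, ψ (y - t • v) ∂μ)) ≤
        ∫ t in Ioc (-s) s, (μ (closedBall (q + t • v) δ)).toReal := by
      apply setIntegral_mono_on
      · exact (hinner_cont.integrableOn_Icc (a := -s) (b := s)).mono_set Ioc_subset_Icc_self
      · exact houtint.mono_set Ioc_subset_Icc_self
      · exact measurableSet_Ioc
      · intro t _
        have int1 : Integrable (fun y => ψ (y - t • v)) μ := by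
          apply Integrable.mono' (g := fun _ => (1:ℝ)) (integrable_const 1)
          · apply Continuous.aestronglyMeasurable; fun_prop
          · apply ae_of_all; intro y; simpa using ftcBump_abs_le_one q δ ε _
        have int2 : Integrable ((closedBall (q + t • v) δ).indicator (fun _ => (1:ℝ))) μ :=
          (integrable_const 1).indicator measurableSet_closedBall
        calc (∫ y, ψ (y - t • v) ∂μ)
            ≤ ∫ y, (closedBall (q + t • v) δ).indicator (fun _ => (1:ℝ)) y ∂μ := by
              apply integral_mono int1 int2
              intro y
              by_cases hy : y ∈ closedBall (q + t • v) δ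
              · rw [indicator_of_mem hy]
                exact ftcBump_le_one q δ ε _
              · rw [indicator_of_notMem hy]
                have : ψ (y - t • v) = 0 := by
                  apply ftcBump_eq_zero q hε
                  by_contra hcon
                  push_neg at hcon
                  apply hy
                  rw [mem_closedBall, show y = (y - t • v) + t • v by abel, dist_add_right]
                  exact le_of_lt hcon
                exact le_of_eq this
          _ = (μ (closedBall (q + t • v) δ)).toReal := by
              rw [integral_indicator_const (1:ℝ) measurableSet_closedBall]
              simp [measureReal_def]
    have hstep2 : (∫ t in Ioc (-s) s, (μ (closedBall (q + t • v) δ)).toReal) ≤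
        ∫ t in Icc (-s) s, (μ (closedBall (q + t • v) δ)).toReal := by
      apply setIntegral_mono_set houtint
      · apply ae_of_all
        intro t
        exact ENNReal.toReal_nonneg
      · exact HasSubset.Subset.eventuallyLE Ioc_subset_Icc_self
    rw [hswap]
    exact hstep1.trans hstep2
  calc (∫ y in closedBall q (δ - ε), (f (y + s • v) - f (y - s • v)))
      ≤ ∫ z, ψ z * (ft (z + s • v) - ft (z - s • v)) := low1
    _ = ∫ y, ft y * (ψ (y - s • v) - ψ (y + s • v)) := key2.symm
    _ = ∫ y, φ y ∂μ := key1.symm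
    _ ≤ ∫ t in Icc (-s) s, (μ (closedBall (q + t • v) δ)).toReal := hup

set_option maxHeartbeats 1000000 in
/-- A fundamental-theorem-of-calculus type inequality for the distributional directional
derivative measure `μ` of a function `f` that is nondecreasing in direction `v`. -/
theorem fundamental_thm_of_calculus_for_measure
    (n : ℕ) (U : Set (EuclideanSpace ℝ (Fin n))) (hU : IsOpen U)
    (v : EuclideanSpace ℝ (Fin n)) (f : EuclideanSpace ℝ (Fin n) → ℝ)
    (hmeas : AEMeasurable f (volume.restrict U))
    (hloc : LocallyIntegrableOn f U volume)
    (hmono : ∀ y ∈ U, ∀ t : ℝ, 0 ≤ t → (∀ r ∈ Icc (0 : ℝ) t, y + r • v ∈ U) →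
      f y ≤ f (y + t • v))
    (μ : Measure (EuclideanSpace ℝ (Fin n))) [IsFiniteMeasure μ]
    (hweak : ∀ φ : EuclideanSpace ℝ (Fin n) → ℝ, Continuous φ → HasCompactSupport φ →
      tsupport φ ⊆ U →
      Tendsto (fun h : ℝ => ∫ y, φ y * ((f (y + h • v) - f y) / h))
        (nhdsWithin 0 (Ioi 0)) (nhds (∫ y, φ y ∂μ)))
    (q : EuclideanSpace ℝ (Fin n)) (δ s : ℝ) (hδ : 0 < δ) (hs : 0 < s)
    (hsub : ∀ t ∈ Icc (-(2 * s)) (2 * s), closedBall (q + t • v) δ ⊆ U) :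
    ∫ y in closedBall q δ, (f (y + s • v) - f (y - s • v)) ≤
      ∫ t in Icc (-s) s, (μ (closedBall (q + t • v) δ)).toReal := by
  set g : (EE n) → ℝ := fun y => f (y + s • v) - f (y - s • v) with hgdef
  -- integrability of g on the closed ball
  have hsIcc : (s : ℝ) ∈ Icc (-(2*s)) (2*s) := ⟨by linarith, by linarith⟩
  have hsIcc' : (-s : ℝ) ∈ Icc (-(2*s)) (2*s) := ⟨by linarith, by linarith⟩
  have htrans : ∀ a : (EE n), (q + a ∈ U → True) → True := fun _ _ => trivial
  have hint1 : IntegrableOn (fun y : (EE n) => f (y + s • v)) (closedBall q δ) volume := by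
    have h1 : IntegrableOn f (closedBall (q + s • v) δ) volume :=
      hloc.integrableOn_compact_subset (hsub s hsIcc) (isCompact_closedBall _ _)
    have hemb := (MeasurableEquiv.addRight (s • v) :
      EuclideanSpace ℝ (Fin n) ≃ᵐ EuclideanSpace ℝ (Fin n)).measurableEmbedding
    have hpre : (fun y : (EE n) => y + s • v) ⁻¹' closedBall (q + s • v) δ = closedBall q δ := by
      ext y; simp [mem_closedBall, dist_add_right]
    have := ((measurePreserving_add_right volume (s • v)).integrableOn_comp_preimage hemb
      (f := f) (s := closedBall (q + s • v) δ)).2 h1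
    rwa [hpre] at this
  have hint2 : IntegrableOn (fun y : (EE n) => f (y - s • v)) (closedBall q δ) volume := by
    have h1 : IntegrableOn f (closedBall (q + (-s) • v) δ) volume :=
      hloc.integrableOn_compact_subset (hsub (-s) hsIcc') (isCompact_closedBall _ _)
    have hemb := (MeasurableEquiv.addRight (-(s • v)) :
      EuclideanSpace ℝ (Fin n) ≃ᵐ EuclideanSpace ℝ (Fin n)).measurableEmbedding
    have hpre : (fun y : (EE n) => y + -(s • v)) ⁻¹' closedBall (q + (-s) • v) δ = closedBall q δ := by
      ext y
      rw [mem_preimage, mem_closedBall, show q + (-s) • v = q + -(s • v) by module,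
        dist_add_right, mem_closedBall]
    have := ((measurePreserving_add_right volume (-(s • v))).integrableOn_comp_preimage hemb
      (f := f) (s := closedBall (q + (-s) • v) δ)).2 h1
    rw [hpre] at this
    apply this.congr_fun ?_ measurableSet_closedBall
    intro y _
    simp [sub_eq_add_neg]
  have hintg : IntegrableOn g (closedBall q δ) volume := hint1.sub hint2
  -- monotone family of balls
  have hmono_sets : Monotone (fun k : ℕ => closedBall q (δ - δ / (k + 2))) := by
    intro a b hab
    apply closedBall_subset_closedBall
    have h2a : (0:ℝ) < a + 2 := by positivity
    have h2b : (0:ℝ) < b + 2 := by positivity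
    have : δ / (b + 2) ≤ δ / (a + 2) := by
      apply div_le_div_of_nonneg_left hδ.le h2a
      linarith [(Nat.cast_le (α := ℝ)).2 hab]
    linarith
  have hunion : (⋃ k : ℕ, closedBall q (δ - δ / (k + 2))) = ball q δ := by
    ext y
    simp only [mem_iUnion, mem_closedBall, mem_ball]
    constructor
    · rintro ⟨k, hk⟩
      have : (0:ℝ) < δ / (k + 2) := by positivity
      linarith
    · intro hy
      set r := δ - dist y q with hrdef
      have hr : 0 < r := by simp [hrdef]; linarith
      obtain ⟨k, hk⟩ := exists_nat_gt (δ / r)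
      refine ⟨k, ?_⟩
      have hk2 : (0:ℝ) < (k:ℝ) + 2 := by positivity
      have : δ / ((k:ℝ) + 2) ≤ r := by
        rw [div_le_iff₀ hk2]
        have h1 : δ / r < (k:ℝ) + 2 := by linarith
        calc δ = (δ / r) * r := by field_simp
          _ ≤ ((k:ℝ) + 2) * r := mul_le_mul_of_nonneg_right h1.le hr.le
          _ = r * ((k:ℝ) + 2) := by ring
      linarith [this]
  have hintg_ball : IntegrableOn g (ball q δ) volume :=
    hintg.mono_set ball_subset_closedBall
  have htend := tendsto_setIntegral_of_monotone (μ := volume) (f := g)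
    (s := fun k : ℕ => closedBall q (δ - δ / (k + 2)))
    (fun _ => measurableSet_closedBall) hmono_sets (by rw [hunion]; exact hintg_ball)
  rw [hunion] at htend
  have hball : (∫ y in ball q δ, g y) ≤
      ∫ t in Icc (-s) s, (μ (closedBall (q + t • v) δ)).toReal := by
    apply le_of_tendsto htend
    apply Eventually.of_forall
    intro k
    have hεpos : 0 < δ / ((k:ℝ) + 2) := by positivity
    have hεδ : δ / ((k:ℝ) + 2) < δ := by
      rw [div_lt_iff₀ (by positivity : (0:ℝ) < (k:ℝ)+2)]
      nlinarith
    have := ftc_key n U hU v f hmeas hloc hmono μ hweak q δ s (δ / ((k:ℝ) + 2)) hδ hs hsub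
      hεpos hεδ
    exact_mod_cast this
  have hae : (closedBall q δ : Set (EE n)) =ᵐ[volume] ball q δ := by
    apply MeasureTheory.ae_eq_set.2
    constructor
    · rw [closedBall_diff_ball]
      exact Measure.addHaar_sphere_of_ne_zero volume q hδ.ne'
    · rw [diff_eq_empty.2 ball_subset_closedBall]
      exact measure_empty
  calc (∫ y in closedBall q δ, (f (y + s • v) - f (y - s • v)))
      = ∫ y in ball q δ, g y := setIntegral_congr_set hae
    _ ≤ ∫ t in Icc (-s) s, (μ (closedBall (q + t • v) δ)).toReal := hball
end

section
/- Let γ : [0, 1] → ℝ^n be Lipschitz continuous such that each coordinate function t ↦ γ(t)_i is nondecreasing (i = 1, …, n) and Σ_{i=1}^n (γ(1)_i − γ(0)_i) = 1. Define f : [0, 1] → [0, 1] by f(t) = Σ_{i=1}^n (γ(t)_i − γ(0)_i), and define γ̃ : [0, 1] → ℝ^n by γ̃(τ) = γ(sup{σ ∈ [0, 1] : f(σ) ≤ τ}). Then: (i) γ̃(0) = γ(0) and γ̃(1) = γ(1); (ii) γ = γ̃ ∘ f on [0, 1]; (iii) for all 0 ≤ τ₁ ≤ τ₂ ≤ 1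 one has Σ_{i=1}^n |γ̃(τ₂)_i − γ̃(τ₁)_i| = τ₂ − τ₁, i.e., γ̃ has unit speed with respect to the ℓ¹-norm on ℝ^n; in particular each coordinate of γ̃ is nondecreasing, γ̃ is Lipschitz, and γ̃ is bi-Lipschitz onto its image with respect to the Euclidean metric. -/
open Set Finset

/-- Reparametrisation of a Lipschitz curve with nondecreasing coordinates to unit
`ℓ¹`-speed: with `f(t) = Σᵢ (γ(t)ᵢ − γ(0)ᵢ)` and `γ̃(τ) = γ(sup{σ : f(σ) ≤ τ})`,
the curve `γ̃` has the same endpoints, satisfies `γ = γ̃ ∘ f`, has unit `ℓ¹`-speed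
(hence nondecreasing coordinates), and is bi-Lipschitz for the Euclidean metric. -/
theorem unit_speed_reparametrisation
    (n : ℕ) (γ : ℝ → EuclideanSpace ℝ (Fin n))
    (K : NNReal) (hlip : LipschitzOnWith K γ (Icc (0 : ℝ) 1))
    (hmono : ∀ i, MonotoneOn (fun t => γ t i) (Icc (0 : ℝ) 1))
    (hsum : ∑ i, (γ 1 i - γ 0 i) = 1)
    (f : ℝ → ℝ) (hf : ∀ t, f t = ∑ i, (γ t i - γ 0 i))
    (tγ : ℝ → EuclideanSpace ℝ (Fin n))
    (htγ : ∀ τ, tγ τ = γ (sSup {σ ∈ Icc (0 : ℝ) 1 | f σ ≤ τ})) :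
    (tγ 0 = γ 0 ∧ tγ 1 = γ 1) ∧
    (∀ t ∈ Icc (0 : ℝ) 1, γ t = tγ (f t)) ∧
    (∀ τ₁ τ₂ : ℝ, 0 ≤ τ₁ → τ₁ ≤ τ₂ → τ₂ ≤ 1 →
      ∑ i, |tγ τ₂ i - tγ τ₁ i| = τ₂ - τ₁) ∧
    (∀ i, MonotoneOn (fun τ => tγ τ i) (Icc (0 : ℝ) 1)) ∧
    (∃ C : ℝ, 1 ≤ C ∧ ∀ τ₁ ∈ Icc (0 : ℝ) 1, ∀ τ₂ ∈ Icc (0 : ℝ) 1,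
      (1 / C) * |τ₂ - τ₁| ≤ dist (tγ τ₁) (tγ τ₂) ∧
      dist (tγ τ₁) (tγ τ₂) ≤ C * |τ₂ - τ₁|) := by
  set g : ℝ → ℝ := fun τ => sSup {σ ∈ Icc (0 : ℝ) 1 | f σ ≤ τ} with hg
  have hf0 : f 0 = 0 := by simp [hf]
  have hf1 : f 1 = 1 := by rw [hf]; exact hsum
  -- f is monotone on [0,1]
  have hfmono : MonotoneOn f (Icc (0 : ℝ) 1) := by
    intro s hs t ht hst
    rw [hf, hf]
    exact Finset.sum_le_sum fun i _ => sub_le_sub_right (hmono i hs ht hst) _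
  -- f is continuous on [0,1]
  have hfcont : ContinuousOn f (Icc (0 : ℝ) 1) := by
    have : ContinuousOn (fun t => ∑ i, (γ t i - γ 0 i)) (Icc (0 : ℝ) 1) := by
      apply continuousOn_finset_sum
      intro i _
      exact (((EuclideanSpace.proj i).continuous.comp_continuousOn
        hlip.continuousOn).sub continuousOn_const)
    exact this.congr fun t _ => hf t
  -- ℓ¹ distance along γ
  have keyA : ∀ s ∈ Icc (0 : ℝ) 1, ∀ t ∈ Icc (0 : ℝ) 1, s ≤ t →
      ∑ i, |γ t i - γ s i| = f t - f s := by
    intro s hs t ht hst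
    rw [hf, hf, ← Finset.sum_sub_distrib]
    refine Finset.sum_congr rfl fun i _ => ?_
    rw [abs_of_nonneg (sub_nonneg.2 (hmono i hs ht hst))]
    ring
  have keyB : ∀ s ∈ Icc (0 : ℝ) 1, ∀ t ∈ Icc (0 : ℝ) 1, s ≤ t → f s = f t →
      γ s = γ t := by
    intro s hs t ht hst hfeq
    have h0 : ∑ i, |γ t i - γ s i| = 0 := by rw [keyA s hs t ht hst, hfeq, sub_self]
    have := (Finset.sum_eq_zero_iff_of_nonneg
      (fun i _ => abs_nonneg (γ t i - γ s i))).1 h0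
    refine PiLp.ext fun i => ?_
    have := this i (Finset.mem_univ i)
    have h := abs_eq_zero.1 this
    linarith [sub_eq_zero.1 h]
  -- basic facts about the set S τ
  have hSne : ∀ τ : ℝ, 0 ≤ τ → ({σ ∈ Icc (0 : ℝ) 1 | f σ ≤ τ} : Set ℝ).Nonempty :=
    fun τ hτ => ⟨0, ⟨le_refl 0, zero_le_one⟩, by rw [hf0]; exact hτ⟩
  have hSbdd : ∀ τ : ℝ, BddAbove {σ ∈ Icc (0 : ℝ) 1 | f σ ≤ τ} :=
    fun τ => ⟨1, fun σ hσ => hσ.1.2⟩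
  have hgIcc : ∀ τ : ℝ, 0 ≤ τ → g τ ∈ Icc (0 : ℝ) 1 := by
    intro τ hτ
    constructor
    · exact le_csSup (hSbdd τ) ⟨⟨le_refl 0, zero_le_one⟩, by rw [hf0]; exact hτ⟩
    · exact csSup_le (hSne τ hτ) fun σ hσ => hσ.1.2
  -- g τ belongs to S τ (the set is closed)
  have hgmem : ∀ τ : ℝ, 0 ≤ τ → f (g τ) ≤ τ := by
    intro τ hτ
    have hclosed : IsClosed {σ ∈ Icc (0 : ℝ) 1 | f σ ≤ τ} := by
      have : {σ ∈ Icc (0 : ℝ) 1 | f σ ≤ τ} = Icc (0 : ℝ) 1 ∩ f ⁻¹' (Iic τ) := rfl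
      rw [this]
      exact hfcont.preimage_isClosed_of_isClosed isClosed_Icc isClosed_Iic
    exact (hclosed.csSup_mem (hSne τ hτ) (hSbdd τ)).2
  -- f (g τ) = τ for τ ∈ [0,1], via intermediate value theorem
  have hfg : ∀ τ ∈ Icc (0 : ℝ) 1, f (g τ) = τ := by
    intro τ hτ
    refine le_antisymm (hgmem τ hτ.1) ?_
    have hIVT : τ ∈ f '' Icc (0 : ℝ) 1 := by
      apply intermediate_value_Icc zero_le_one hfcont
      rw [hf0, hf1]; exact hτ
    obtain ⟨t, htIcc, htτ⟩ := hIVT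
    have htle : t ≤ g τ := le_csSup (hSbdd τ) ⟨htIcc, le_of_eq htτ⟩
    calc τ = f t := htτ.symm
    _ ≤ f (g τ) := hfmono htIcc (hgIcc τ hτ.1) htle
  have hgmono : ∀ τ₁ τ₂ : ℝ, 0 ≤ τ₁ → τ₁ ≤ τ₂ → g τ₁ ≤ g τ₂ :=
    fun τ₁ τ₂ h1 h12 => csSup_le_csSup (hSbdd τ₂) (hSne τ₁ h1)
      fun σ hσ => ⟨hσ.1, hσ.2.trans h12⟩
  -- endpoints
  have hend0 : tγ 0 = γ 0 := by
    rw [htγ]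
    exact (keyB 0 ⟨le_refl 0, zero_le_one⟩ (g 0) (hgIcc 0 le_rfl)
      (hgIcc 0 le_rfl).1 (by rw [hf0, hfg 0 ⟨le_rfl, zero_le_one⟩])).symm
  have hend1 : tγ 1 = γ 1 := by
    rw [htγ]
    exact keyB (g 1) (hgIcc 1 zero_le_one) 1 ⟨zero_le_one, le_refl 1⟩
      (hgIcc 1 zero_le_one).2 (by rw [hfg 1 ⟨zero_le_one, le_rfl⟩, hf1])
  -- γ = tγ ∘ f
  have hcomp : ∀ t ∈ Icc (0 : ℝ) 1, γ t = tγ (f t) := by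
    intro t ht
    have hft : f t ∈ Icc (0 : ℝ) 1 := by
      constructor
      · rw [← hf0]; exact hfmono ⟨le_rfl, zero_le_one⟩ ht ht.1
      · rw [← hf1]; exact hfmono ht ⟨zero_le_one, le_rfl⟩ ht.2
    have htle : t ≤ g (f t) := le_csSup (hSbdd (f t)) ⟨ht, le_rfl⟩
    rw [htγ]
    exact keyB t ht (g (f t)) (hgIcc _ hft.1) htle
      (by rw [hfg (f t) hft])
  -- unit ℓ¹ speed
  have hspeed : ∀ τ₁ τ₂ : ℝ, 0 ≤ τ₁ → τ₁ ≤ τ₂ → τ₂ ≤ 1 →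
      ∑ i, |tγ τ₂ i - tγ τ₁ i| = τ₂ - τ₁ := by
    intro τ₁ τ₂ h0 h12 h1
    have hτ₁ : τ₁ ∈ Icc (0 : ℝ) 1 := ⟨h0, h12.trans h1⟩
    have hτ₂ : τ₂ ∈ Icc (0 : ℝ) 1 := ⟨h0.trans h12, h1⟩
    rw [htγ, htγ]
    rw [keyA (g τ₁) (hgIcc τ₁ h0) (g τ₂) (hgIcc τ₂ hτ₂.1)
      (hgmono τ₁ τ₂ h0 h12), hfg τ₁ hτ₁, hfg τ₂ hτ₂]
  -- coordinates of tγ nondecreasing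
  have htmono : ∀ i, MonotoneOn (fun τ => tγ τ i) (Icc (0 : ℝ) 1) := by
    intro i τ₁ hτ₁ τ₂ hτ₂ h12
    simp only [htγ]
    exact hmono i (hgIcc τ₁ hτ₁.1) (hgIcc τ₂ hτ₂.1) (hgmono τ₁ τ₂ hτ₁.1 h12)
  refine ⟨⟨hend0, hend1⟩, hcomp, hspeed, htmono, ?_⟩
  -- bi-Lipschitz with C = √n
  have hn : (1 : ℝ) ≤ n := by
    rcases Nat.eq_zero_or_pos n with h | h
    · exfalso; subst h; simpa using hsum
    · exact_mod_cast h
  refine ⟨Real.sqrt n, Real.one_le_sqrt.2 hn, ?_⟩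
  have hsqrtpos : 0 < Real.sqrt n := Real.sqrt_pos.2 (by linarith)
  intro τ₁ hτ₁ τ₂ hτ₂
  -- reduce to ordered case via symmetry
  wlog h12 : τ₁ ≤ τ₂ generalizing τ₁ τ₂
  · have := this τ₂ hτ₂ τ₁ hτ₁ (le_of_not_ge h12)
    rwa [dist_comm, abs_sub_comm] at this
  have hL : ∑ i, |tγ τ₂ i - tγ τ₁ i| = τ₂ - τ₁ :=
    hspeed τ₁ τ₂ hτ₁.1 h12 hτ₂.2
  have habs : |τ₂ - τ₁| = τ₂ - τ₁ := abs_of_nonneg (by linarith)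
  have hdist : dist (tγ τ₁) (tγ τ₂) =
      Real.sqrt (∑ i, |tγ τ₂ i - tγ τ₁ i| ^ 2) := by
    rw [EuclideanSpace.dist_eq]
    congr 1
    refine Finset.sum_congr rfl fun i _ => ?_
    rw [Real.dist_eq, abs_sub_comm]
  have hnonneg : ∀ i ∈ Finset.univ, (0:ℝ) ≤ |tγ τ₂ i - tγ τ₁ i| :=
    fun i _ => abs_nonneg _
  have hsumnn : (0:ℝ) ≤ ∑ i, |tγ τ₂ i - tγ τ₁ i| :=
    Finset.sum_nonneg hnonneg
  constructor
  · -- lower bound: ℓ¹ ≤ √n · ℓ²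
    have hCS : (∑ i, |tγ τ₂ i - tγ τ₁ i|) ^ 2 ≤
        n * ∑ i, |tγ τ₂ i - tγ τ₁ i| ^ 2 := by
      have := sq_sum_le_card_mul_sum_sq
        (s := Finset.univ) (f := fun i => |tγ τ₂ i - tγ τ₁ i|)
      simpa using this
    have h1 : τ₂ - τ₁ ≤ Real.sqrt (n * ∑ i, |tγ τ₂ i - tγ τ₁ i| ^ 2) := by
      rw [← hL, ← Real.sqrt_sq hsumnn]
      exact Real.sqrt_le_sqrt hCS
    rw [Real.sqrt_mul (by positivity)] at h1
    rw [habs, hdist, div_mul_eq_mul_div, one_mul, div_le_iff₀ hsqrtpos]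
    calc τ₂ - τ₁ ≤ Real.sqrt n * Real.sqrt (∑ i, |tγ τ₂ i - tγ τ₁ i| ^ 2) := h1
    _ = Real.sqrt (∑ i, |tγ τ₂ i - tγ τ₁ i| ^ 2) * Real.sqrt n := mul_comm _ _
  · -- upper bound: ℓ² ≤ ℓ¹ ≤ √n · ℓ¹
    have h2 : dist (tγ τ₁) (tγ τ₂) ≤ τ₂ - τ₁ := by
      rw [hdist, ← hL, ← Real.sqrt_sq hsumnn]
      exact Real.sqrt_le_sqrt (Finset.sum_sq_le_sq_sum_of_nonneg hnonneg)
    rw [habs]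
    calc dist (tγ τ₁) (tγ τ₂) ≤ τ₂ - τ₁ := h2
    _ = 1 * (τ₂ - τ₁) := (one_mul _).symm
    _ ≤ Real.sqrt n * (τ₂ - τ₁) :=
        mul_le_mul_of_nonneg_right (Real.one_le_sqrt.2 hn) (by linarith)
end
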